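/- arXiv:2104.14935 — 2 statements merged into one kernel-verified Lean document; each statement's English description precedes it below -/
import Mathlib

section
/- Let G be a graph on ten vertices such that both G and its complement are minimally t-imperfect, with the standard 10-vertex labeling. If, for some i ∈ {1,…,5} (indices mod 5), neither u_iu_{i−1} nor u_iu_{i+1} is an edge of G, then u_{i−1}u_{i+1} is not an edge of G either. -/
open SimpleGraph

namespace TP

/-- A set of vertices is independent: no two of its vertices are adjacent. -/
def IsIndep {V : Type*} (G : SimpleGraph V) (S : Set V) : Prop :=
  S.Pairwise fun u v => ¬ G.Adj u v

/-- The finite vertex set `s` induces a cycle of length `n` in `G`. -/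
def IsInducedCycle {V : Type*} (G : SimpleGraph V) (n : ℕ) (s : Finset V) : Prop :=
  3 ≤ n ∧ s.card = n ∧ Nonempty (G.induce (s : Set V) ≃g SimpleGraph.cycleGraph n)

/-- The polytope `P(G)` given by nonnegativity, edge and odd-cycle inequalities. -/
def tPolytope {V : Type*} [Fintype V] (G : SimpleGraph V) : Set (V → ℝ) :=
  {x | (∀ v, 0 ≤ x v ∧ x v ≤ 1) ∧
    (∀ ⦃u v⦄, G.Adj u v → x u + x v ≤ 1) ∧
    (∀ (n : ℕ) (s : Finset V), Odd n → IsInducedCycle G n s →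
      ∑ v ∈ s, x v ≤ ((n : ℝ) - 1) / 2)}

/-- The independent set polytope: the convex hull of characteristic vectors of
independent sets. -/
def stabPolytope {V : Type*} [Fintype V] (G : SimpleGraph V) : Set (V → ℝ) :=
  convexHull ℝ {x | ∃ S : Set V, IsIndep G S ∧ x = S.indicator fun _ => (1 : ℝ)}

/-- A graph is t-perfect if `P(G)` equals its independent set polytope. -/
def TPerfect {V : Type*} [Fintype V] (G : SimpleGraph V) : Prop :=
  tPolytope G = stabPolytope G

/-- The graph obtained from `G` by a t-contraction at `v` : the closed neighbourhood
of `v` is replaced by a single new vertex (`none`), adjacent to every vertex that had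
a neighbour in the closed neighbourhood of `v`. -/
def tContract {V : Type*} (G : SimpleGraph V) (v : V) :
    SimpleGraph (Option {w : V // w ≠ v ∧ ¬ G.Adj v w}) :=
  SimpleGraph.fromRel fun a b =>
    match a, b with
    | some a, some b => G.Adj a.1 b.1
    | some a, none => ∃ x, (x = v ∨ G.Adj v x) ∧ G.Adj a.1 x
    | none, _ => False

/-- A bundled finite simple graph. -/
structure FinGraph : Type 1 where
  V : Type
  [fintype : Fintype V]
  graph : SimpleGraph V

attribute [instance] FinGraph.fintype

def FinGraph.of {V : Type} [Fintype V] (G : SimpleGraph V) : FinGraph :=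
  FinGraph.mk V G

/-- `B` is obtained from `A` by deleting one vertex (up to isomorphism). -/
def DeleteStep (A B : FinGraph) : Prop :=
  ∃ v : A.V, Nonempty (B.graph ≃g A.graph.induce {w | w ≠ v})

/-- `B` is obtained from `A` by a t-contraction at a vertex whose neighbourhood is
independent (up to isomorphism). -/
def ContractStep (A B : FinGraph) : Prop :=
  ∃ v : A.V, IsIndep A.graph (A.graph.neighborSet v) ∧
    Nonempty (B.graph ≃g tContract A.graph v)

/-- One step: a vertex deletion or a t-contraction. -/
def Step (A B : FinGraph) : Prop := DeleteStep A B ∨ ContractStep A B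

/-- `TMinor B A` : `B` is a t-minor of `A`, i.e. obtained from `A` by a sequence of
vertex deletions and t-contractions. -/
def TMinor (B A : FinGraph) : Prop := Relation.ReflTransGen Step A B

/-- `B` is a proper t-minor of `A` : a t-minor with fewer vertices. -/
def ProperTMinor (B A : FinGraph) : Prop :=
  TMinor B A ∧ Fintype.card B.V < Fintype.card A.V

/-- A graph is minimally t-imperfect if it is not t-perfect but every proper t-minor
of it is t-perfect. -/
def MinimallyTImperfect {V : Type} [Fintype V] (G : SimpleGraph V) : Prop :=
  ¬ TPerfect G ∧ ∀ B : FinGraph, ProperTMinor B (FinGraph.of G) → TPerfect B.graph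

/-- A core graph: every proper t-minor of `G` and every proper t-minor of its
complement is t-perfect. -/
def IsCore {V : Type} [Fintype V] (G : SimpleGraph V) : Prop :=
  (∀ B : FinGraph, ProperTMinor B (FinGraph.of G) → TPerfect B.graph) ∧
  (∀ B : FinGraph, ProperTMinor B (FinGraph.of Gᶜ) → TPerfect B.graph)

/-- A partition of `V \ {v}` into `count` sets of size `size`, all satisfying `P`. -/
def CoverOff {V : Type*} (v : V) (count size : ℕ) (P : Finset V → Prop) : Prop :=
  ∃ f : Fin count → Finset V,
    (∀ i, P (f i) ∧ (f i).card = size) ∧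
    (∀ i j, i ≠ j → Disjoint (f i) (f j)) ∧
    (∀ i, v ∉ f i) ∧
    (∀ w, w ≠ v → ∃ i, w ∈ f i)

/-- `(p,q)`-partitionable graphs. -/
def PQPartitionable {V : Type*} [Fintype V] (G : SimpleGraph V) (p q : ℕ) : Prop :=
  2 ≤ p ∧ 2 ≤ q ∧ Fintype.card V = p * q + 1 ∧
  ∀ v : V,
    CoverOff v q p (fun S => IsIndep G (S : Set V)) ∧
    CoverOff v p q (fun S => G.IsClique (S : Set V))

/-- `G` has an odd hole: an induced odd cycle of length at least five. -/
def HasOddHole {V : Type*} (G : SimpleGraph V) : Prop :=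
  ∃ (n : ℕ) (s : Finset V), Odd n ∧ 5 ≤ n ∧ IsInducedCycle G n s

/-- A graph is perfect iff neither it nor its complement has an odd hole. -/
def GPerfect {V : Type*} (G : SimpleGraph V) : Prop :=
  ¬ HasOddHole G ∧ ¬ HasOddHole Gᶜ

/-- Every vertex has degree at least three and at most five. -/
def DegreeBounded {V : Type*} (G : SimpleGraph V) : Prop :=
  ∀ v, 3 ≤ (G.neighborSet v).ncard ∧ (G.neighborSet v).ncard ≤ 5

/-- The `n`-wheel: an `n`-cycle plus a vertex (`none`) adjacent to every cycle vertex. -/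
def wheel (n : ℕ) : SimpleGraph (Option (Fin n)) :=
  SimpleGraph.fromRel fun a b =>
    match a, b with
    | some i, some j => (SimpleGraph.cycleGraph n).Adj i j
    | none, some _ => True
    | _, none => False

/-- Vertex type of the standard 9-vertex labeling: `inl i` is `v_{i+1}`,
`inr j` is `u_{j+1}`. -/
abbrev V9 := Fin 5 ⊕ Fin 4

/-- Vertex type of the standard 10-vertex labeling. -/
abbrev V10 := Fin 5 ⊕ Fin 5

/-- The standard 9-vertex labeling: `v1 … v5` form a 5-hole; the neighbours of `u_i`
among the `v`'s are `v_{i+2}` and `v_{i+3}` together possibly with `v_i`. -/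
def Std9 (G : SimpleGraph V9) : Prop :=
  (∀ i j : Fin 5, G.Adj (.inl i) (.inl j) ↔ (j = i + 1 ∨ i = j + 1)) ∧
  (∀ (i : Fin 4) (k : Fin 5), G.Adj (.inr i) (.inl k) →
    k = i.castSucc + 2 ∨ k = i.castSucc + 3 ∨ k = i.castSucc) ∧
  (∀ i : Fin 4, G.Adj (.inr i) (.inl (i.castSucc + 2)) ∧ G.Adj (.inr i) (.inl (i.castSucc + 3)))

/-- The standard 10-vertex labeling. -/
def Std10 (G : SimpleGraph V10) : Prop :=
  (∀ i j : Fin 5, G.Adj (.inl i) (.inl j) ↔ (j = i + 1 ∨ i = j + 1)) ∧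
  (∀ (i k : Fin 5), G.Adj (.inr i) (.inl k) → k = i + 2 ∨ k = i + 3 ∨ k = i) ∧
  (∀ i : Fin 5, G.Adj (.inr i) (.inl (i + 2)) ∧ G.Adj (.inr i) (.inl (i + 3)))

/-- The 9-vertex graph of the standard labeling with prescribed `U`-edges and
prescribed extra edges `u_i v_i`. -/
def graph9 (uEdges : List (Fin 4 × Fin 4)) (extra : List (Fin 4)) : SimpleGraph V9 :=
  SimpleGraph.fromRel fun a b =>
    match a, b with
    | .inl i, .inl j => j = i + 1
    | .inr i, .inl k => k = i.castSucc + 2 ∨ k = i.castSucc + 3 ∨ (i ∈ extra ∧ k = i.castSucc)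
    | .inl _, .inr _ => False
    | .inr i, .inr j => (i, j) ∈ uEdges

/-- The 10-vertex graph of the standard labeling with prescribed `U`-edges and
prescribed extra edges `u_i v_i`. -/
def graph10 (uEdges : List (Fin 5 × Fin 5)) (extra : List (Fin 5)) : SimpleGraph V10 :=
  SimpleGraph.fromRel fun a b =>
    match a, b with
    | .inl i, .inl j => j = i + 1
    | .inr i, .inl k => k = i + 2 ∨ k = i + 3 ∨ (i ∈ extra ∧ k = i)
    | .inl _, .inr _ => False
    | .inr i, .inr j => (i, j) ∈ uEdges

/-- The graph `(12°435°1)`. -/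
def G12435 : SimpleGraph V10 :=
  graph10 [(0,1),(1,3),(3,2),(2,4),(4,0)] [1,4]

/-- The graph `(1°2°435°1°)`. -/
def G12435' : SimpleGraph V10 :=
  graph10 [(0,1),(1,3),(3,2),(2,4),(4,0)] [0,1,4]


/-! ### Auxiliary development for Statement 15 -/

section Stmt15Aux

/-- `Fintype.card` does not depend on the instance. -/
lemma card_irrel {α : Type*} (i1 i2 : Fintype α) : @Fintype.card α i1 = @Fintype.card α i2 :=
  congrArg (@Fintype.card α) (Subsingleton.elim i1 i2)

lemma card_coeSet_eq {V : Type*} (S : Finset V) (inst : Fintype ↥(↑S : Set V)) :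
    @Fintype.card _ inst = S.card := by
  rw [← @Set.toFinset_card _ _ inst, Finset.toFinset_coe]

/-- Any graph in which every independent set has at most `k` vertices, with
`3k < |V|`, is not t-perfect: the constant `1/3` vector lies in the t-polytope
but violates the valid inequality `∑ x ≤ k` of the independent set polytope. -/
lemma notTPerfect_of_indep_bound {V : Type} [Fintype V] (G : SimpleGraph V) (k : ℕ)
    (hk : ∀ S : Set V, IsIndep G S → S.ncard ≤ k) (hcard : 3 * k < Fintype.card V) :
    ¬ TPerfect G := by
  classical
  intro h
  have hx : (fun _ : V => (1/3 : ℝ)) ∈ tPolytope G := by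
    refine ⟨fun v => by norm_num, fun u v _ => by norm_num, ?_⟩
    intro n s _ hcyc
    have h3 : (3 : ℝ) ≤ (n : ℝ) := by exact_mod_cast hcyc.1
    have hs : (s.card : ℝ) = (n : ℝ) := by exact_mod_cast hcyc.2.1
    rw [Finset.sum_const, nsmul_eq_mul, hs]
    linarith
  have hlin : IsLinearMap ℝ (fun x : V → ℝ => ∑ v, x v) := by
    constructor
    · intro x y; simp [Finset.sum_add_distrib]
    · intro c x; simp [Finset.mul_sum]
  have hsub : stabPolytope G ⊆ {x : V → ℝ | ∑ v, x v ≤ (k : ℝ)} := by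
    apply convexHull_min
    · rintro x ⟨S, hS, rfl⟩
      have hsum : ∑ v, S.indicator (fun _ => (1:ℝ)) v
          = ((Finset.univ.filter (· ∈ S)).card : ℝ) := by
        rw [← Finset.sum_boole]
        exact Finset.sum_congr rfl fun v _ => by simp [Set.indicator_apply]
      have hcardS : (Finset.univ.filter (· ∈ S)).card = S.ncard := by
        rw [Set.ncard_eq_toFinset_card']
        congr 1
        ext v; simp
      have hkS := hk S hS
      simp only [Set.mem_setOf_eq]
      rw [hsum, hcardS]
      exact_mod_cast hkS
    · exact convex_halfSpace_le hlin _
  have hxs := hsub (h ▸ hx)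
  simp only [Set.mem_setOf_eq, Finset.sum_const, nsmul_eq_mul, Finset.card_univ] at hxs
  have hc : (3 * k : ℝ) < (Fintype.card V : ℝ) := by exact_mod_cast hcard
  linarith

lemma step_iso_right {A B C : FinGraph} (h : Step A B) (e : Nonempty (C.graph ≃g B.graph)) :
    Step A C := by
  obtain ⟨e⟩ := e
  rcases h with ⟨v, ⟨f⟩⟩ | ⟨v, hv, ⟨f⟩⟩
  · exact Or.inl ⟨v, ⟨e.trans f⟩⟩
  · exact Or.inr ⟨v, hv, ⟨e.trans f⟩⟩

lemma transGen_iso_right {A B C : FinGraph} (h : Relation.TransGen Step A B)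
    (e : Nonempty (C.graph ≃g B.graph)) : Relation.TransGen Step A C := by
  cases h with
  | single h => exact Relation.TransGen.single (step_iso_right h e)
  | tail h1 h2 => exact Relation.TransGen.tail h1 (step_iso_right h2 e)

lemma step_del {V : Type} [Fintype V] [DecidableEq V] (G : SimpleGraph V) (v : V) :
    Step (FinGraph.of G) (FinGraph.of (G.induce {w | w ≠ v})) :=
  Or.inl ⟨v, ⟨SimpleGraph.Iso.refl⟩⟩

/-- Transport an induced subgraph along an equality of vertex sets. -/
def induceCongr {V : Type*} (G : SimpleGraph V) {s t : Set V} (h : s = t) :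
    G.induce s ≃g G.induce t := by subst h; exact SimpleGraph.Iso.refl

/-- Unnest a doubly induced subgraph. -/
def isoNest {V : Type*} (G : SimpleGraph V) {s t : Set V} (hst : s ⊆ t) :
    G.induce s ≃g (G.induce t).induce {x : ↥t | ↑x ∈ s} :=
  ⟨⟨fun a => ⟨⟨a.1, hst a.2⟩, a.2⟩, fun b => ⟨b.1.1, b.2⟩, fun _ => rfl, fun _ => rfl⟩,
    Iff.rfl⟩

lemma induced_minor_aux : ∀ (n : ℕ) (V : Type) [Fintype V] [DecidableEq V]
    (G : SimpleGraph V) (s : Set V) [DecidablePred (· ∈ s)],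
    Fintype.card V ≤ n → s ≠ Set.univ →
    Relation.TransGen Step (FinGraph.of G) (FinGraph.of (G.induce s)) := by
  intro n
  induction n with
  | zero =>
    intro V _ _ G s _ hcard hs
    have hemp : IsEmpty V := Fintype.card_eq_zero_iff.mp (Nat.le_zero.mp hcard)
    exact absurd (Set.eq_univ_of_forall fun x => isEmptyElim x) hs
  | succ n ih =>
    intro V _ _ G s _ hcard hs
    have hex : ∃ v, v ∉ s := by
      by_contra hc
      push_neg at hc
      exact hs (Set.eq_univ_of_forall hc)
    obtain ⟨v, hv⟩ := hex
    have hsub : s ⊆ {w | w ≠ v} := fun w hw hwv => hv (hwv ▸ hw)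
    by_cases ht : s = {w | w ≠ v}
    · exact Relation.TransGen.single
        (step_iso_right (step_del G v) ⟨induceCongr G ht⟩)
    · have hlt : Fintype.card ↥{w : V | w ≠ v} ≤ n := by
        have h1 : Fintype.card ↥{w : V | w ≠ v} < Fintype.card V :=
          Fintype.card_subtype_lt (x := v) (by simp)
        omega
      have htne : ({x : ↥{w : V | w ≠ v} | ↑x ∈ s}) ≠ Set.univ := by
        intro hU
        apply ht
        apply Set.Subset.antisymm hsub
        intro w hw
        exact (hU ▸ Set.mem_univ (⟨w, hw⟩ : ↥{w : V | w ≠ v}) :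
          (⟨w, hw⟩ : ↥{w : V | w ≠ v}) ∈ {x : ↥{w : V | w ≠ v} | ↑x ∈ s})
      have rec' := ih ↥{w : V | w ≠ v} (G.induce {w | w ≠ v}) {x | ↑x ∈ s} hlt htne
      exact transGen_iso_right
        (Relation.TransGen.head (step_del G v) rec') ⟨isoNest G hsub⟩

lemma induced_minor {V : Type} [Fintype V] [DecidableEq V] (G : SimpleGraph V)
    (s : Set V) [DecidablePred (· ∈ s)] (hs : s ≠ Set.univ) :
    Relation.TransGen Step (FinGraph.of G) (FinGraph.of (G.induce s)) :=
  induced_minor_aux (Fintype.card V) V G s le_rfl hs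

lemma kill' {V : Type} [Fintype V] [DecidableEq V] (G : SimpleGraph V)
    (hG : MinimallyTImperfect G) (S : Finset V) (k : ℕ)
    (hlt : 3 * k < S.card) (hne : S.card < Fintype.card V)
    (hcov : ∀ T : Finset V, T ⊆ S → T.card = k + 1 →
      ∃ a ∈ T, ∃ b ∈ T, a ≠ b ∧ G.Adj a b) : False := by
  classical
  have hsne : (↑S : Set V) ≠ Set.univ := by
    intro h
    have h2 : (Finset.univ : Finset V) ⊆ S := fun x _ => by
      have hx : x ∈ (↑S : Set V) := h ▸ Set.mem_univ x
      exact hx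
    have h3 := Finset.card_le_card h2
    rw [Finset.card_univ] at h3
    omega
  have hminor := induced_minor G (↑S : Set V) hsne
  refine absurd (hG.2 _ ⟨hminor.to_reflTransGen, ?_⟩)
    (notTPerfect_of_indep_bound _ k ?_ ?_)
  · -- cardinality drop
    exact lt_of_le_of_lt (le_of_eq (card_coeSet_eq S _))
      (show S.card < Fintype.card V by omega)
  · -- independence bound
    intro T hT
    by_contra hbig
    push_neg at hbig
    obtain ⟨T', hT'T, hT'c⟩ : ∃ t : Set ↥(↑S : Set V), t ⊆ T ∧ t.ncard = k + 1 :=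
      Set.exists_subset_card_eq (s := T) hbig
    have hfin : Set.Finite (α := ↥(↑S : Set V)) T' := Set.toFinite T'
    have hT₀S : hfin.toFinset.image Subtype.val ⊆ S := by
      intro x hx
      simp only [Finset.mem_image, Set.Finite.mem_toFinset] at hx
      obtain ⟨y, _, rfl⟩ := hx
      exact y.2
    have hT₀c : (hfin.toFinset.image Subtype.val).card = k + 1 := by
      rw [Finset.card_image_of_injective _ Subtype.val_injective,
        ← Set.ncard_eq_toFinset_card T' hfin, hT'c]
    obtain ⟨a, haT, b, hbT, hab, hadj⟩ := hcov _ hT₀S hT₀c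
    simp only [Finset.mem_image, Set.Finite.mem_toFinset] at haT hbT
    obtain ⟨a', ha', rfl⟩ := haT
    obtain ⟨b', hb', rfl⟩ := hbT
    exact hT (hT'T ha') (hT'T hb') (fun h => hab (by rw [h])) hadj
  · -- 3k < card
    exact lt_of_lt_of_le (by omega : 3 * k < S.card) (le_of_eq (card_coeSet_eq S _).symm)

end Stmt15Aux

section Stmt15Model

/-- The adjacency template of the standard 10-vertex labeling, with `u`-`u`
adjacencies given by `f` and the optional edges `u_j v_j` given by `g`. -/
def modelRel (f : Fin 5 → Fin 5 → Bool) (g : Fin 5 → Bool) : V10 → V10 → Prop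
  | .inl j, .inl k => k = j + 1
  | .inr j, .inl k => k = j + 2 ∨ k = j + 3 ∨ (g j = true ∧ k = j)
  | .inl _, .inr _ => False
  | .inr j, .inr k => f j k = true

instance decModelRel (f : Fin 5 → Fin 5 → Bool) (g : Fin 5 → Bool) :
    DecidableRel (modelRel f g) := fun a b =>
  match a, b with
  | .inl j, .inl k => inferInstanceAs (Decidable (k = j + 1))
  | .inr j, .inl k => inferInstanceAs (Decidable (k = j + 2 ∨ k = j + 3 ∨ (g j = true ∧ k = j)))
  | .inl _, .inr _ => inferInstanceAs (Decidable False)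
  | .inr j, .inr k => inferInstanceAs (Decidable (f j k = true))

/-- The model graph of the standard 10-vertex labeling. -/
def model (f : Fin 5 → Fin 5 → Bool) (g : Fin 5 → Bool) : SimpleGraph V10 :=
  SimpleGraph.fromRel (modelRel f g)

instance decModel (f : Fin 5 → Fin 5 → Bool) (g : Fin 5 → Bool) :
    DecidableRel (model f g).Adj := fun a b =>
  inferInstanceAs (Decidable (a ≠ b ∧ (modelRel f g a b ∨ modelRel f g b a)))

instance decComplAdj {V : Type*} [DecidableEq V] (G : SimpleGraph V) [DecidableRel G.Adj] :
    DecidableRel Gᶜ.Adj := fun a b =>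
  inferInstanceAs (Decidable (a ≠ b ∧ ¬ G.Adj a b))

/-- A witness entry: a side (`true` = the graph, `false` = the complement),
a bound `k`, a vertex set `S` with independence number at most `k` on that side,
and a list of certifying edges. -/
abbrev Entry := Bool × ℕ × Finset V10 × List (V10 × V10)

def adjB (f : Fin 5 → Fin 5 → Bool) (g : Fin 5 → Bool) : V10 → V10 → Bool
  | .inl j, .inl k => !(j == k) && (k == j + 1 || j == k + 1)
  | .inr j, .inl k => k == j + 2 || k == j + 3 || (g j && k == j)
  | .inl j, .inr k => j == k + 2 || j == k + 3 || (g k && j == k)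
  | .inr j, .inr k => !(j == k) && (f j k || f k j)

lemma adjB_iff (f : Fin 5 → Fin 5 → Bool) (g : Fin 5 → Bool) (a b : V10) :
    adjB f g a b = true ↔ (model f g).Adj a b := by
  cases a <;> cases b <;>
    simp [adjB, model, SimpleGraph.fromRel_adj, modelRel] <;> tauto

def entryValidB (f : Fin 5 → Fin 5 → Bool) (g : Fin 5 → Bool) : Entry → Bool
  | (true, _, _, E) => E.all fun p => adjB f g p.1 p.2
  | (false, _, _, E) => E.all fun p => !(decide (p.1 = p.2)) && !(adjB f g p.1 p.2)

def pairCover (S : Finset V10) (E : List (V10 × V10)) : Prop :=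
  ∀ a ∈ S, ∀ b ∈ S, a ≠ b →
    ∃ p ∈ E, p.1 ∈ ({a, b} : Finset V10) ∧ p.2 ∈ ({a, b} : Finset V10) ∧ p.1 ≠ p.2

instance decPairCover (S : Finset V10) (E : List (V10 × V10)) : Decidable (pairCover S E) := by
  unfold pairCover; infer_instance

def tripleCover (S : Finset V10) (E : List (V10 × V10)) : Prop :=
  ∀ a ∈ S, ∀ b ∈ S, ∀ c ∈ S, a ≠ b → a ≠ c → b ≠ c →
    ∃ p ∈ E, p.1 ∈ ({a, b, c} : Finset V10) ∧ p.2 ∈ ({a, b, c} : Finset V10) ∧ p.1 ≠ p.2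

instance decTripleCover (S : Finset V10) (E : List (V10 × V10)) : Decidable (tripleCover S E) := by
  unfold tripleCover; infer_instance

def entryGood (e : Entry) : Prop :=
  (e.2.1 = 1 ∨ e.2.1 = 2) ∧ 3 * e.2.1 < e.2.2.1.card ∧ e.2.2.1.card < 10 ∧
  (e.2.1 = 1 → pairCover e.2.2.1 e.2.2.2) ∧ (e.2.1 = 2 → tripleCover e.2.2.1 e.2.2.2)

instance decEntryGood : DecidablePred entryGood := fun e => by
  unfold entryGood; infer_instance

def fOf (b02 b03 b12 b13 b23 b24 b34 : Bool) : Fin 5 → Fin 5 → Bool := fun j k =>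
  match j.val, k.val with
  | 0, 1 => false | 1, 0 => false
  | 0, 4 => false | 4, 0 => false
  | 1, 4 => true | 4, 1 => true
  | 0, 2 => b02 | 2, 0 => b02
  | 0, 3 => b03 | 3, 0 => b03
  | 1, 2 => b12 | 2, 1 => b12
  | 1, 3 => b13 | 3, 1 => b13
  | 2, 3 => b23 | 3, 2 => b23
  | 2, 4 => b24 | 4, 2 => b24
  | 3, 4 => b34 | 4, 3 => b34
  | _, _ => false

def gOf (e0 e1 e2 e3 e4 : Bool) : Fin 5 → Bool := fun j =>
  match j.val with
  | 0 => e0 | 1 => e1 | 2 => e2 | 3 => e3 | _ => e4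

end Stmt15Model

def shapes : List Entry := [
  (true, 2, ({.inl 0, .inl 1, .inl 4, .inr 1, .inr 2, .inr 3, .inr 4} : Finset V10), ([(.inl 0, .inl 1), (.inl 0, .inl 4), (.inl 0, .inr 2), (.inl 0, .inr 3), (.inl 1, .inr 3), (.inl 1, .inr 4), (.inl 4, .inr 1), (.inl 4, .inr 2), (.inr 1, .inr 2), (.inr 1, .inr 4), (.inr 3, .inr 4)] : List (V10 × V10))),
  (false, 1, ({.inl 4, .inr 0, .inr 3, .inr 4} : Finset V10), ([(.inl 4, .inr 0), (.inl 4, .inr 3), (.inl 4, .inr 4), (.inr 0, .inr 3), (.inr 0, .inr 4), (.inr 3, .inr 4)] : List (V10 × V10))),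
  (false, 2, ({.inl 0, .inl 1, .inl 3, .inr 0, .inr 1, .inr 2, .inr 4} : Finset V10), ([(.inl 0, .inl 3), (.inl 0, .inr 4), (.inl 1, .inr 0), (.inl 1, .inr 1), (.inl 1, .inr 2), (.inl 3, .inr 4), (.inr 0, .inr 1), (.inr 0, .inr 2), (.inr 1, .inr 2)] : List (V10 × V10))),
  (true, 2, ({.inl 0, .inl 1, .inl 4, .inr 1, .inr 2, .inr 3, .inr 4} : Finset V10), ([(.inl 0, .inl 4), (.inl 0, .inr 2), (.inl 0, .inr 3), (.inl 1, .inr 1), (.inl 1, .inr 3), (.inl 1, .inr 4), (.inl 4, .inr 1), (.inl 4, .inr 2), (.inl 4, .inr 4), (.inr 1, .inr 4), (.inr 2, .inr 3)] : List (V10 × V10))),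
  (false, 2, ({.inl 0, .inl 2, .inl 3, .inr 1, .inr 2, .inr 3, .inr 4} : Finset V10), ([(.inl 0, .inl 2), (.inl 0, .inl 3), (.inl 0, .inr 1), (.inl 0, .inr 4), (.inl 2, .inr 1), (.inl 2, .inr 3), (.inl 3, .inr 2), (.inl 3, .inr 4), (.inr 1, .inr 3), (.inr 2, .inr 3), (.inr 2, .inr 4)] : List (V10 × V10))),
  (false, 2, ({.inl 0, .inl 1, .inl 3, .inr 0, .inr 1, .inr 2, .inr 4} : Finset V10), ([(.inl 0, .inr 0), (.inl 0, .inr 1), (.inl 0, .inr 4), (.inl 1, .inl 3), (.inl 1, .inr 1), (.inl 1, .inr 2), (.inl 3, .inr 2), (.inl 3, .inr 4), (.inr 0, .inr 1), (.inr 0, .inr 4), (.inr 1, .inr 2)] : List (V10 × V10))),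
  (true, 2, ({.inl 0, .inl 1, .inl 4, .inr 1, .inr 2, .inr 3, .inr 4} : Finset V10), ([(.inl 0, .inl 1), (.inl 0, .inr 3), (.inl 1, .inr 3), (.inl 4, .inr 1), (.inl 4, .inr 2), (.inl 4, .inr 4), (.inr 1, .inr 2), (.inr 1, .inr 4), (.inr 2, .inr 4)] : List (V10 × V10))),
  (true, 2, ({.inl 0, .inl 1, .inl 4, .inr 1, .inr 2, .inr 3, .inr 4} : Finset V10), ([(.inl 0, .inl 4), (.inl 0, .inr 2), (.inl 1, .inr 1), (.inl 1, .inr 3), (.inl 1, .inr 4), (.inl 4, .inr 2), (.inr 1, .inr 3), (.inr 1, .inr 4), (.inr 3, .inr 4)] : List (V10 × V10))),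
  (false, 2, ({.inl 0, .inl 2, .inl 4, .inr 0, .inr 1, .inr 3, .inr 4} : Finset V10), ([(.inl 0, .inr 0), (.inl 0, .inr 1), (.inl 0, .inr 4), (.inl 2, .inl 4), (.inl 2, .inr 1), (.inl 2, .inr 3), (.inl 4, .inr 3), (.inl 4, .inr 4), (.inr 0, .inr 1), (.inr 0, .inr 4), (.inr 3, .inr 4)] : List (V10 × V10))),
  (true, 2, ({.inl 0, .inl 3, .inl 4, .inr 0, .inr 1, .inr 2, .inr 3} : Finset V10), ([(.inl 0, .inr 0), (.inl 0, .inr 2), (.inl 0, .inr 3), (.inl 3, .inl 4), (.inl 3, .inr 1), (.inl 4, .inr 1), (.inr 0, .inr 2), (.inr 0, .inr 3), (.inr 2, .inr 3)] : List (V10 × V10))),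
  (false, 2, ({.inl 1, .inl 3, .inl 4, .inr 0, .inr 2, .inr 3, .inr 4} : Finset V10), ([(.inl 1, .inl 3), (.inl 1, .inl 4), (.inl 1, .inr 2), (.inl 3, .inr 2), (.inl 3, .inr 4), (.inl 4, .inr 0), (.inl 4, .inr 3), (.inr 0, .inr 3), (.inr 0, .inr 4), (.inr 2, .inr 4), (.inr 3, .inr 4)] : List (V10 × V10))),
  (false, 2, ({.inl 1, .inl 2, .inl 4, .inr 0, .inr 1, .inr 2, .inr 3} : Finset V10), ([(.inl 1, .inl 4), (.inl 1, .inr 0), (.inl 1, .inr 2), (.inl 2, .inl 4), (.inl 2, .inr 1), (.inl 2, .inr 3), (.inl 4, .inr 3), (.inr 0, .inr 1), (.inr 0, .inr 2), (.inr 1, .inr 2), (.inr 1, .inr 3)] : List (V10 × V10))),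
  (true, 2, ({.inl 0, .inl 1, .inl 2, .inr 0, .inr 2, .inr 3, .inr 4} : Finset V10), ([(.inl 0, .inr 0), (.inl 0, .inr 2), (.inl 0, .inr 3), (.inl 1, .inl 2), (.inl 1, .inr 3), (.inl 1, .inr 4), (.inl 2, .inr 0), (.inl 2, .inr 2), (.inl 2, .inr 4), (.inr 0, .inr 2), (.inr 3, .inr 4)] : List (V10 × V10))),
  (true, 2, ({.inl 0, .inl 3, .inl 4, .inr 0, .inr 1, .inr 2, .inr 3} : Finset V10), ([(.inl 0, .inr 0), (.inl 0, .inr 2), (.inl 0, .inr 3), (.inl 3, .inl 4), (.inl 3, .inr 0), (.inl 3, .inr 1), (.inl 3, .inr 3), (.inl 4, .inr 1), (.inl 4, .inr 2), (.inr 0, .inr 3), (.inr 1, .inr 2)] : List (V10 × V10))),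
  (false, 1, ({.inl 3, .inr 2, .inr 3, .inr 4} : Finset V10), ([(.inl 3, .inr 2), (.inl 3, .inr 3), (.inl 3, .inr 4), (.inr 2, .inr 3), (.inr 2, .inr 4), (.inr 3, .inr 4)] : List (V10 × V10))),
  (false, 1, ({.inl 2, .inr 1, .inr 2, .inr 3} : Finset V10), ([(.inl 2, .inr 1), (.inl 2, .inr 2), (.inl 2, .inr 3), (.inr 1, .inr 2), (.inr 1, .inr 3), (.inr 2, .inr 3)] : List (V10 × V10))),
  (true, 2, ({.inl 0, .inl 1, .inl 4, .inr 1, .inr 2, .inr 3, .inr 4} : Finset V10), ([(.inl 0, .inl 4), (.inl 0, .inr 2), (.inl 0, .inr 3), (.inl 1, .inr 1), (.inl 1, .inr 3), (.inl 1, .inr 4), (.inl 4, .inr 2), (.inl 4, .inr 4), (.inr 1, .inr 3), (.inr 1, .inr 4), (.inr 2, .inr 4)] : List (V10 × V10))),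
  (false, 2, ({.inl 1, .inl 2, .inl 4, .inr 0, .inr 1, .inr 2, .inr 3} : Finset V10), ([(.inl 1, .inr 0), (.inl 1, .inr 1), (.inl 1, .inr 2), (.inl 2, .inl 4), (.inl 2, .inr 2), (.inl 2, .inr 3), (.inl 4, .inr 0), (.inl 4, .inr 3), (.inr 0, .inr 1), (.inr 0, .inr 3), (.inr 1, .inr 2)] : List (V10 × V10))),
  (false, 2, ({.inl 1, .inl 3, .inl 4, .inr 0, .inr 2, .inr 3, .inr 4} : Finset V10), ([(.inl 1, .inl 4), (.inl 1, .inr 0), (.inl 1, .inr 2), (.inl 3, .inr 2), (.inl 3, .inr 3), (.inl 3, .inr 4), (.inl 4, .inr 0), (.inl 4, .inr 3), (.inl 4, .inr 4), (.inr 0, .inr 2), (.inr 3, .inr 4)] : List (V10 × V10))),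
  (true, 2, ({.inl 2, .inl 3, .inl 4, .inr 0, .inr 1, .inr 2, .inr 4} : Finset V10), ([(.inl 2, .inr 0), (.inl 2, .inr 2), (.inl 2, .inr 4), (.inl 3, .inl 4), (.inl 3, .inr 0), (.inl 3, .inr 1), (.inl 4, .inr 1), (.inl 4, .inr 4), (.inr 0, .inr 2), (.inr 1, .inr 4), (.inr 2, .inr 4)] : List (V10 × V10))),
  (true, 2, ({.inl 1, .inl 2, .inl 3, .inr 0, .inr 1, .inr 3, .inr 4} : Finset V10), ([(.inl 1, .inr 1), (.inl 1, .inr 3), (.inl 1, .inr 4), (.inl 2, .inl 3), (.inl 2, .inr 0), (.inl 2, .inr 4), (.inl 3, .inr 0), (.inl 3, .inr 3), (.inr 0, .inr 3), (.inr 1, .inr 3), (.inr 1, .inr 4)] : List (V10 × V10))),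
  (false, 2, ({.inl 0, .inl 2, .inl 4, .inr 0, .inr 1, .inr 3, .inr 4} : Finset V10), ([(.inl 0, .inr 0), (.inl 0, .inr 1), (.inl 0, .inr 4), (.inl 2, .inl 4), (.inl 2, .inr 1), (.inl 2, .inr 3), (.inl 4, .inr 3), (.inl 4, .inr 4), (.inr 0, .inr 1), (.inr 0, .inr 4), (.inr 1, .inr 3)] : List (V10 × V10))),
  (true, 2, ({.inl 0, .inl 1, .inl 4, .inr 1, .inr 2, .inr 3, .inr 4} : Finset V10), ([(.inl 0, .inl 1), (.inl 0, .inr 2), (.inl 0, .inr 3), (.inl 1, .inr 3), (.inl 1, .inr 4), (.inl 4, .inr 1), (.inl 4, .inr 2), (.inl 4, .inr 4), (.inr 1, .inr 2), (.inr 1, .inr 4), (.inr 2, .inr 3)] : List (V10 × V10))),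
  (false, 2, ({.inl 1, .inl 3, .inl 4, .inr 0, .inr 2, .inr 3, .inr 4} : Finset V10), ([(.inl 1, .inl 4), (.inl 1, .inr 0), (.inl 1, .inr 2), (.inl 3, .inr 2), (.inl 3, .inr 3), (.inl 3, .inr 4), (.inl 4, .inr 0), (.inl 4, .inr 4), (.inr 0, .inr 4), (.inr 2, .inr 3), (.inr 3, .inr 4)] : List (V10 × V10))),
  (false, 2, ({.inl 1, .inl 2, .inl 4, .inr 0, .inr 1, .inr 2, .inr 3} : Finset V10), ([(.inl 1, .inr 0), (.inl 1, .inr 1), (.inl 1, .inr 2), (.inl 2, .inl 4), (.inl 2, .inr 2), (.inl 2, .inr 3), (.inl 4, .inr 0), (.inl 4, .inr 3), (.inr 0, .inr 1), (.inr 1, .inr 2), (.inr 2, .inr 3)] : List (V10 × V10))),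
  (false, 2, ({.inl 1, .inl 2, .inl 4, .inr 0, .inr 1, .inr 2, .inr 3} : Finset V10), ([(.inl 1, .inl 4), (.inl 1, .inr 0), (.inl 1, .inr 2), (.inl 2, .inr 1), (.inl 2, .inr 2), (.inl 2, .inr 3), (.inl 4, .inr 0), (.inl 4, .inr 3), (.inr 0, .inr 3), (.inr 1, .inr 2), (.inr 1, .inr 3)] : List (V10 × V10))),
  (false, 2, ({.inl 0, .inl 1, .inl 3, .inr 0, .inr 1, .inr 2, .inr 4} : Finset V10), ([(.inl 0, .inr 0), (.inl 0, .inr 1), (.inl 0, .inr 4), (.inl 1, .inl 3), (.inl 1, .inr 1), (.inl 1, .inr 2), (.inl 3, .inr 2), (.inl 3, .inr 4), (.inr 0, .inr 1), (.inr 0, .inr 4), (.inr 2, .inr 4)] : List (V10 × V10))),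
  (true, 2, ({.inl 0, .inl 1, .inl 2, .inr 0, .inr 2, .inr 3, .inr 4} : Finset V10), ([(.inl 0, .inr 0), (.inl 0, .inr 2), (.inl 0, .inr 3), (.inl 1, .inl 2), (.inl 1, .inr 3), (.inl 1, .inr 4), (.inl 2, .inr 2), (.inl 2, .inr 4), (.inr 0, .inr 2), (.inr 0, .inr 3), (.inr 2, .inr 4)] : List (V10 × V10))),
  (true, 2, ({.inl 0, .inl 3, .inl 4, .inr 0, .inr 1, .inr 2, .inr 3} : Finset V10), ([(.inl 0, .inr 0), (.inl 0, .inr 2), (.inl 0, .inr 3), (.inl 3, .inl 4), (.inl 3, .inr 1), (.inl 3, .inr 3), (.inl 4, .inr 1), (.inl 4, .inr 2), (.inr 0, .inr 2), (.inr 0, .inr 3), (.inr 1, .inr 3)] : List (V10 × V10)))]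

section Stmt15Main

set_option maxRecDepth 100000 in
set_option maxHeartbeats 12000000 in
lemma shapes_cover : ∀ e ∈ shapes, entryGood e := by
  letI : Decidable (∀ e ∈ shapes, entryGood e) := List.decidableBAll _ shapes
  decide

lemma entryGood_cov {side : Bool} {k : ℕ} {S : Finset V10} {E : List (V10 × V10)}
    (hg : entryGood (side, k, S, E)) :
    ∀ T : Finset V10, T ⊆ S → T.card = k + 1 →
      ∃ p ∈ E, p.1 ∈ T ∧ p.2 ∈ T ∧ p.1 ≠ p.2 := by
  obtain ⟨hk, -, -, hp1, hp2⟩ := hg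
  intro T hTS hTc
  rcases hk with hk | hk
  · have hk' : k = 1 := hk
    subst hk'
    obtain ⟨a, b, hab, rfl⟩ := Finset.card_eq_two.mp hTc
    exact hp1 rfl a (hTS (by simp)) b (hTS (by simp)) hab
  · have hk' : k = 2 := hk
    subst hk'
    obtain ⟨a, b, c, hab, hac, hbc, rfl⟩ := Finset.card_eq_three.mp hTc
    exact hp2 rfl a (hTS (by simp)) b (hTS (by simp)) c (hTS (by simp)) hab hac hbc

set_option maxRecDepth 100000 in
set_option maxHeartbeats 12000000 in
lemma crunch : ∀ b02 b03 b12 b13 b23 b24 b34 e0 e1 e2 e3 e4 : Bool,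
    ∃ e ∈ shapes,
      entryValidB (fOf b02 b03 b12 b13 b23 b24 b34) (gOf e0 e1 e2 e3 e4) e = true := by
  letI : ∀ (f : Fin 5 → Fin 5 → Bool) (g : Fin 5 → Bool),
      Decidable (∃ e ∈ shapes, entryValidB f g e = true) := fun f g =>
    List.decidableBEx _ shapes
  decide

lemma entryValidB_true_edges {f : Fin 5 → Fin 5 → Bool} {g : Fin 5 → Bool}
    {k : ℕ} {S : Finset V10} {E : List (V10 × V10)}
    (h : entryValidB f g (true, k, S, E) = true) :
    ∀ p ∈ E, (model f g).Adj p.1 p.2 := by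
  simp only [entryValidB] at h
  exact fun p hp => (adjB_iff f g p.1 p.2).mp (List.all_eq_true.mp h p hp)

lemma entryValidB_false_edges {f : Fin 5 → Fin 5 → Bool} {g : Fin 5 → Bool}
    {k : ℕ} {S : Finset V10} {E : List (V10 × V10)}
    (h : entryValidB f g (false, k, S, E) = true) :
    ∀ p ∈ E, ((model f g)ᶜ).Adj p.1 p.2 := by
  simp only [entryValidB] at h
  intro p hp
  have h2 := List.all_eq_true.mp h p hp
  rw [Bool.and_eq_true, Bool.not_eq_true', Bool.not_eq_true'] at h2
  rw [SimpleGraph.compl_adj]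
  refine ⟨of_decide_eq_false h2.1, fun hadj => ?_⟩
  have := (adjB_iff f g p.1 p.2).mpr hadj
  rw [h2.2] at this
  exact Bool.false_ne_true this

lemma apply_entry (G : SimpleGraph V10) (hmin : MinimallyTImperfect G)
    (M : SimpleGraph V10) (ψ : V10 ≃ V10)
    (hψ : ∀ a b, M.Adj a b ↔ G.Adj (ψ a) (ψ b))
    (S : Finset V10) (k : ℕ) (E : List (V10 × V10))
    (hlt : 3 * k < S.card) (hne : S.card < 10)
    (hcov : ∀ T : Finset V10, T ⊆ S → T.card = k + 1 →
      ∃ p ∈ E, p.1 ∈ T ∧ p.2 ∈ T ∧ p.1 ≠ p.2)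
    (hedge : ∀ p ∈ E, M.Adj p.1 p.2) : False := by
  classical
  have hV : Fintype.card V10 = 10 := by
    simp [Fintype.card_sum]
  apply kill' G hmin (S.image ψ) k
  · rwa [Finset.card_image_of_injective _ ψ.injective]
  · rw [Finset.card_image_of_injective _ ψ.injective, hV]; exact hne
  · intro T hTS hTc
    have hT₀S : T.image ψ.symm ⊆ S := by
      intro x hx
      simp only [Finset.mem_image] at hx
      obtain ⟨y, hy, rfl⟩ := hx
      have hy2 := hTS hy
      simp only [Finset.mem_image] at hy2
      obtain ⟨z, hz, hzy⟩ := hy2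
      rw [← hzy]
      simpa using hz
    have hT₀c : (T.image ψ.symm).card = k + 1 := by
      rw [Finset.card_image_of_injective _ ψ.symm.injective, hTc]
    obtain ⟨p, hpE, h1, h2, hne'⟩ := hcov (T.image ψ.symm) hT₀S hT₀c
    have hmem : ∀ x ∈ T.image ψ.symm, ψ x ∈ T := by
      intro x hx
      simp only [Finset.mem_image] at hx
      obtain ⟨y, hy, rfl⟩ := hx
      simpa using hy
    exact ⟨ψ p.1, hmem _ h1, ψ p.2, hmem _ h2,
      fun h => hne' (ψ.injective h), (hψ _ _).mp (hedge p hpE)⟩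

/-- Rotation of the standard labeling by `i`. -/
def rot (i : Fin 5) : V10 ≃ V10 := Equiv.sumCongr (Equiv.addLeft i) (Equiv.addLeft i)

@[simp] lemma rot_inl (i j : Fin 5) : rot i (Sum.inl j) = Sum.inl (i + j) := rfl
@[simp] lemma rot_inr (i j : Fin 5) : rot i (Sum.inr j) = Sum.inr (i + j) := rfl

lemma fin5_c1 : ∀ i j k : Fin 5,
    (i + k = i + j + 1 ∨ i + j = i + k + 1) ↔ (k = j + 1 ∨ j = k + 1) := by decide

lemma fin5_c2 : ∀ i j k : Fin 5,
    (i + k = i + j + 2 ∨ i + k = i + j + 3 ∨ i + k = i + j) ↔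
      (k = j + 2 ∨ k = j + 3 ∨ k = j) := by decide

lemma fin5_ne1 : ∀ j k : Fin 5, (k = j + 1 ∨ j = k + 1) → (Sum.inl j : V10) ≠ Sum.inl k := by
  decide

/-- The `u`-`u` adjacency bits of `G`, rotated by `i`. -/
noncomputable def fG (G : SimpleGraph V10) (i : Fin 5) : Fin 5 → Fin 5 → Bool := fun j k =>
  @decide (G.Adj (.inr (i + j)) (.inr (i + k))) (Classical.propDecidable _)

/-- The `u_j v_j` adjacency bits of `G`, rotated by `i`. -/
noncomputable def gG (G : SimpleGraph V10) (i : Fin 5) : Fin 5 → Bool := fun j =>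
  @decide (G.Adj (.inr (i + j)) (.inl (i + j))) (Classical.propDecidable _)

lemma rl_iff (G : SimpleGraph V10) (hstd : Std10 G) (i j k : Fin 5) :
    (k = j + 2 ∨ k = j + 3 ∨ (gG G i j = true ∧ k = j)) ↔
      G.Adj (.inr (i + j)) (.inl (i + k)) := by
  classical
  obtain ⟨hvv, huv, hforced⟩ := hstd
  constructor
  · rintro (rfl | rfl | ⟨hg, rfl⟩)
    · have h := (hforced (i + j)).1
      rwa [add_assoc] at h
    · have h := (hforced (i + j)).2
      rwa [add_assoc] at h
    · exact of_decide_eq_true hg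
  · intro h
    have h2 : i + k = i + j + 2 ∨ i + k = i + j + 3 ∨ i + k = i + j :=
      huv (i + j) (i + k) h
    have h3 := (fin5_c2 i j k).mp h2
    rcases h3 with rfl | rfl | rfl
    · exact Or.inl rfl
    · exact Or.inr (Or.inl rfl)
    · exact Or.inr (Or.inr ⟨decide_eq_true h, rfl⟩)

lemma model_iso (G : SimpleGraph V10) (hstd : Std10 G) (i : Fin 5) (a b : V10) :
    (model (fG G i) (gG G i)).Adj a b ↔ G.Adj (rot i a) (rot i b) := by
  classical
  have hvv := hstd.1
  cases a with
  | inl j =>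
    cases b with
    | inl k =>
      simp only [model, SimpleGraph.fromRel_adj, modelRel, rot_inl]
      rw [hvv (i + j) (i + k)]
      constructor
      · rintro ⟨-, h⟩
        exact (fin5_c1 i j k).mpr (by tauto)
      · intro h
        have h' := (fin5_c1 i j k).mp h
        exact ⟨fin5_ne1 j k h', by tauto⟩
    | inr k =>
      simp only [model, SimpleGraph.fromRel_adj, modelRel, rot_inl, rot_inr]
      rw [SimpleGraph.adj_comm, ← rl_iff G hstd i k j]
      simp
  | inr j =>
    cases b with
    | inl k =>
      simp only [model, SimpleGraph.fromRel_adj, modelRel, rot_inl, rot_inr]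
      rw [← rl_iff G hstd i j k]
      simp
    | inr k =>
      simp only [model, SimpleGraph.fromRel_adj, modelRel, rot_inr]
      constructor
      · rintro ⟨hne, h | h⟩
        · exact of_decide_eq_true h
        · exact (of_decide_eq_true h : G.Adj (.inr (i + k)) (.inr (i + j))).symm
      · intro h
        refine ⟨?_, Or.inl (decide_eq_true h)⟩
        intro hjk
        injection hjk with h'
        subst h'
        exact G.irrefl h

end Stmt15Main

/-- if both `G` and its complement are minimally t-imperfect (standard
10-vertex labeling) and neither `u_iu_{i-1}` nor `u_iu_{i+1}` is an edge, then
`u_{i-1}u_{i+1}` is not an edge either. -/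
theorem stmt15 (G : SimpleGraph V10)
    (hG : MinimallyTImperfect G) (hGc : MinimallyTImperfect Gᶜ)
    (hstd : Std10 G) (i : Fin 5)
    (h1 : ¬ G.Adj (.inr i) (.inr (i - 1))) (h2 : ¬ G.Adj (.inr i) (.inr (i + 1))) :
    ¬ G.Adj (.inr (i - 1)) (.inr (i + 1)) := by
  intro hadj
  classical
  have hi1 : ∀ i : Fin 5, i - 1 = i + 4 := by decide
  rw [hi1 i] at h1 hadj
  set f0 := fG G i with hf0def
  set g0 := gG G i with hg0def
  have hsymmf : ∀ j k, f0 j k = f0 k j := fun j k =>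
    decide_eq_decide.mpr (G.adj_comm _ _)
  have hirr : ∀ j, f0 j j = false := fun j => decide_eq_false (G.irrefl)
  have e01 : f0 0 1 = false := decide_eq_false (by rw [add_zero]; exact h2)
  have e04 : f0 0 4 = false := decide_eq_false (by rw [add_zero]; exact h1)
  have e41 : f0 4 1 = true := decide_eq_true hadj
  have e10 : f0 1 0 = false := (hsymmf 1 0).trans e01
  have e40 : f0 4 0 = false := (hsymmf 4 0).trans e04
  have e14 : f0 1 4 = true := (hsymmf 1 4).trans e41
  have hfeq : fOf (f0 0 2) (f0 0 3) (f0 1 2) (f0 1 3) (f0 2 3) (f0 2 4) (f0 3 4) = f0 := by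
    funext j k
    fin_cases j <;> fin_cases k
    · exact (hirr 0).symm
    · exact e01.symm
    · rfl
    · rfl
    · exact e04.symm
    · exact e10.symm
    · exact (hirr 1).symm
    · rfl
    · rfl
    · exact e14.symm
    · exact hsymmf 0 2
    · exact hsymmf 1 2
    · exact (hirr 2).symm
    · rfl
    · rfl
    · exact hsymmf 0 3
    · exact hsymmf 1 3
    · exact hsymmf 2 3
    · exact (hirr 3).symm
    · rfl
    · exact e40.symm
    · exact e41.symm
    · exact hsymmf 2 4
    · exact hsymmf 3 4
    · exact (hirr 4).symm
  have hgeq : gOf (g0 0) (g0 1) (g0 2) (g0 3) (g0 4) = g0 := by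
    funext j; fin_cases j <;> rfl
  obtain ⟨e, he, hval⟩ := crunch (f0 0 2) (f0 0 3) (f0 1 2) (f0 1 3) (f0 2 3)
    (f0 2 4) (f0 3 4) (g0 0) (g0 1) (g0 2) (g0 3) (g0 4)
  rw [hfeq, hgeq] at hval
  have hψ : ∀ a b, (model f0 g0).Adj a b ↔ G.Adj (rot i a) (rot i b) := by
    rw [hf0def, hg0def]
    exact model_iso G hstd i
  have hcover := shapes_cover e he
  obtain ⟨side, k, S, E⟩ := e
  have hk3 : 3 * k < S.card := hcover.2.1
  have hlt10 : S.card < 10 := hcover.2.2.1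
  have hcov := entryGood_cov hcover
  cases side with
  | false =>
    have hedges := entryValidB_false_edges hval
    have hψc : ∀ a b, ((model f0 g0)ᶜ).Adj a b ↔ Gᶜ.Adj (rot i a) (rot i b) := by
      intro a b
      rw [SimpleGraph.compl_adj, SimpleGraph.compl_adj, hψ a b]
      constructor
      · rintro ⟨hne, hnadj⟩
        exact ⟨fun hh => hne ((rot i).injective hh), hnadj⟩
      · rintro ⟨hne, hnadj⟩
        exact ⟨fun hh => hne (by rw [hh]), hnadj⟩
    exact apply_entry Gᶜ hGc ((model f0 g0)ᶜ) (rot i) hψc S k E hk3 hlt10 hcov hedges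
  | true =>
    have hedges := entryValidB_true_edges hval
    exact apply_entry G hG (model f0 g0) (rot i) hψ S k E hk3 hlt10 hcov hedges

end TP
end

section
/- Let G be a graph on ten vertices such that both G and its complement are minimally t-imperfect, with the standard 10-vertex labeling. Then for every i ∈ {1,…,5} (indices mod 5), at least one of u_iu_{i−1} and u_iu_{i+1} is an edge of G. -/
open SimpleGraph

namespace TP

section Part1
variable {W : Type} [Fintype W]

lemma notTPerfect_of_indep_bound_s16 (H : SimpleGraph W) (k : ℕ)
    (hk : ∀ T : Set W, IsIndep H T → T.ncard ≤ k) (hcard : 3 * k < Fintype.card W) :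
    ¬ TPerfect H := by
  classical
  intro htp
  have hx : (fun _ : W => (1:ℝ)/3) ∈ tPolytope H := by
    refine ⟨fun v => by norm_num, fun u v _ => by norm_num, ?_⟩
    intro n s hodd hcyc
    have h3 : 3 ≤ n := hcyc.1
    rw [Finset.sum_const, hcyc.2.1, nsmul_eq_mul]
    have h3' : (3:ℝ) ≤ (n:ℝ) := by exact_mod_cast h3
    linarith
  have hhalf : stabPolytope H ⊆ {x : W → ℝ | ∑ v, x v ≤ (k:ℝ)} := by
    apply convexHull_min
    · rintro x ⟨T, hT, rfl⟩
      have h1 : ∑ v, T.indicator (fun _ => (1:ℝ)) v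
          = ∑ v ∈ Finset.univ.filter (· ∈ T), (1:ℝ) := by
        rw [Finset.sum_indicator_eq_sum_filter]
      have h2 : (Finset.univ.filter (· ∈ T)).card = T.ncard := by
        rw [Set.ncard_eq_toFinset_card']
        congr 1
        ext x
        simp [Set.mem_toFinset]
      have h3 : T.ncard ≤ k := hk T hT
      simp only [Set.mem_setOf_eq]
      rw [h1, Finset.sum_const, nsmul_eq_mul, mul_one]
      have h4 : (Finset.univ.filter (· ∈ T)).card ≤ k := le_of_eq_of_le h2 h3
      exact_mod_cast h4
    · exact convex_halfSpace_le ⟨fun x y => Finset.sum_add_distrib,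
        fun c x => by simp [Finset.mul_sum]⟩ _
  rw [htp] at hx
  have := hhalf hx
  simp only [Set.mem_setOf_eq, Finset.sum_const, Finset.card_univ, nsmul_eq_mul] at this
  have hc : (3 * k : ℝ) < (Fintype.card W : ℝ) := by exact_mod_cast hcard
  nlinarith
end Part1

attribute [local instance 0] Classical.propDecidable
set_option linter.unusedVariables false
section Part2

/-- Induce of induce is induce. -/
def induceInduceIso {V : Type*} (G : SimpleGraph V) (T : Set V) (S : Set V) (h : S ⊆ T) :
    (G.induce T).induce {x : T | (x : V) ∈ S} ≃g G.induce S where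
  toFun := fun x => ⟨x.1.1, x.2⟩
  invFun := fun x => ⟨⟨x.1, h x.2⟩, x.2⟩
  left_inv := fun x => rfl
  right_inv := fun x => rfl
  map_rel_iff' := Iff.rfl

lemma tminor_of_induce_aux : ∀ (n : ℕ) (A B : FinGraph) (S : Set A.V),
    (Set.univ \ S).ncard = n → S ≠ Set.univ →
    Nonempty (B.graph ≃g A.graph.induce S) → TMinor B A := by
  intro n
  induction n with
  | zero =>
    intro A B S hn hS _
    exfalso
    apply hS
    have hfin : (Set.univ \ S).Finite := Set.toFinite _
    have := (Set.ncard_eq_zero hfin).mp hn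
    rw [Set.diff_eq_empty] at this
    exact Set.eq_univ_of_univ_subset this
  | succ n ih =>
    intro A B S hn hS hiso
    have hne : (Set.univ \ S).Nonempty := by
      rw [← Set.ncard_pos (Set.toFinite _), hn]; omega
    obtain ⟨v, hv⟩ := hne
    have hvS : v ∉ S := hv.2
    have hsub : S ⊆ {w | w ≠ v} := fun x hx => by
      intro hxv; exact hvS (hxv ▸ hx)
    by_cases hT : S = {w | w ≠ v}
    · subst hT
      exact Relation.ReflTransGen.single (Or.inl ⟨v, hiso⟩)
    · have step1 : Step A (FinGraph.of (A.graph.induce {w | w ≠ v})) :=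
        Or.inl ⟨v, ⟨SimpleGraph.Iso.refl⟩⟩
      have hiso' : Nonempty (B.graph ≃g
          (A.graph.induce {w | w ≠ v}).induce {x : {w | w ≠ v} | (x : A.V) ∈ S}) := by
        obtain ⟨e⟩ := hiso
        exact ⟨e.trans (induceInduceIso A.graph {w | w ≠ v} S hsub).symm⟩
      have himg : Subtype.val '' (Set.univ \ {x : {w : A.V | w ≠ v} | (x : A.V) ∈ S})
          = (Set.univ \ S) \ {v} := by
        ext w
        simp only [Set.mem_image, Set.mem_diff, Set.mem_univ, true_and,
          Set.mem_singleton_iff, Set.mem_setOf_eq]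
        constructor
        · rintro ⟨x, hx, rfl⟩; exact ⟨hx, x.2⟩
        · rintro ⟨hw, hwv⟩; exact ⟨⟨w, hwv⟩, hw, rfl⟩
      have hn' : (Set.univ \ {x : {w : A.V | w ≠ v} | (x : A.V) ∈ S}).ncard = n := by
        have h1 : (Set.univ \ {x : {w : A.V | w ≠ v} | (x : A.V) ∈ S}).ncard
            = (Subtype.val '' (Set.univ \ {x : {w : A.V | w ≠ v} | (x : A.V) ∈ S})).ncard :=
          (Set.ncard_image_of_injective _ Subtype.val_injective).symm
        rw [h1, himg, Set.ncard_diff_singleton_of_mem hv, hn]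
        omega
      have hS'ne : {x : {w : A.V | w ≠ v} | (x : A.V) ∈ S} ≠ Set.univ := by
        intro hun
        apply hT
        apply Set.Subset.antisymm hsub
        intro w hw
        have h5 : (⟨w, hw⟩ : {w : A.V | w ≠ v}) ∈ {x : {w : A.V | w ≠ v} | (x : A.V) ∈ S} :=
          hun ▸ Set.mem_univ _
        exact h5
      exact Relation.ReflTransGen.head step1
        (ih (FinGraph.of (A.graph.induce {w | w ≠ v})) B
          {x : {w | w ≠ v} | (x : A.V) ∈ S} hn' hS'ne hiso')

lemma tminor_of_induce (A : FinGraph) (S : Set A.V) (hS : S ≠ Set.univ) :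
    TMinor (FinGraph.of (A.graph.induce S)) A :=
  tminor_of_induce_aux _ A _ S rfl hS ⟨SimpleGraph.Iso.refl⟩

end Part2

section Part3

abbrev Bits := List Bool

def mAdj (b : Bits) : V10 → V10 → Bool
 | .inl x, .inl y => decide (y = x+1) || decide (x = y+1)
 | .inl y, .inr x => decide (y = x+2) || decide (y = x+3) || (decide (y = x) && b.getD (8+x.val) false)
 | .inr x, .inl y => decide (y = x+2) || decide (y = x+3) || (decide (y = x) && b.getD (8+x.val) false)
 | .inr x, .inr y => b.getD (match x.val, y.val with
    | 0,2 | 2,0 => 0 | 0,3 | 3,0 => 1 | 1,2 | 2,1 => 2 | 1,3 | 3,1 => 3 | 1,4 | 4,1 => 4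
    | 2,3 | 3,2 => 5 | 2,4 | 4,2 => 6 | 3,4 | 4,3 => 7 | _,_ => 99) false

def sideA (b : Bits) (s : Bool) (x y : V10) : Bool :=
  if s then mAdj b x y else !(decide (x = y)) && !(mAdj b x y)

structure MRule where
  side : Bool
  verts : List V10
  tripsF : List (V10 × V10 × V10)
  tripsV : List (V10 × V10 × V10)

instance : Inhabited MRule := ⟨⟨true, [], [], []⟩⟩

def tripOK (b : Bits) (s : Bool) (t : V10 × V10 × V10) : Bool :=
  sideA b s t.1 t.2.1 || sideA b s t.2.1 t.2.2 || sideA b s t.1 t.2.2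

def edgesOKF (b : Bits) (r : MRule) : Bool := r.tripsF.all (tripOK b r.side)
def edgesOKV (b : Bits) (r : MRule) : Bool := r.tripsV.all (tripOK b r.side)

/-- The rotation embedding of the model into the standard labeling. -/
def φm (i : Fin 5) : V10 → V10 := Sum.map (i + ·) (i + ·)

lemma φm_injective (i : Fin 5) : Function.Injective (φm i) :=
  Function.Injective.sumMap (add_right_injective i) (add_right_injective i)

lemma huv_iff {G : SimpleGraph V10} (hstd : Std10 G) (j k : Fin 5) :
    G.Adj (.inr j) (.inl k) ↔ (k = j+2 ∨ k = j+3 ∨ (k = j ∧ G.Adj (.inr j) (.inl j))) := by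
  constructor
  · intro h
    rcases hstd.2.1 j k h with h' | h' | h'
    · exact Or.inl h'
    · exact Or.inr (Or.inl h')
    · exact Or.inr (Or.inr ⟨h', h' ▸ h⟩)
  · rintro (rfl | rfl | ⟨rfl, h⟩)
    · exact (hstd.2.2 j).1
    · exact (hstd.2.2 j).2
    · exact h

set_option maxRecDepth 10000 in
lemma bridge {G : SimpleGraph V10} (hstd : Std10 G) (i : Fin 5)
    (h1 : ¬ G.Adj (.inr i) (.inr (i+4))) (h2 : ¬ G.Adj (.inr i) (.inr (i+1))) :
    ∀ a c : V10,
      mAdj [decide (G.Adj (.inr i) (.inr (i+2))), decide (G.Adj (.inr i) (.inr (i+3))),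
            decide (G.Adj (.inr (i+1)) (.inr (i+2))), decide (G.Adj (.inr (i+1)) (.inr (i+3))),
            decide (G.Adj (.inr (i+1)) (.inr (i+4))), decide (G.Adj (.inr (i+2)) (.inr (i+3))),
            decide (G.Adj (.inr (i+2)) (.inr (i+4))), decide (G.Adj (.inr (i+3)) (.inr (i+4))),
            decide (G.Adj (.inr i) (.inl i)), decide (G.Adj (.inr (i+1)) (.inl (i+1))),
            decide (G.Adj (.inr (i+2)) (.inl (i+2))), decide (G.Adj (.inr (i+3)) (.inl (i+3))),
            decide (G.Adj (.inr (i+4)) (.inl (i+4)))] a c = true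
        ↔ G.Adj (φm i a) (φm i c) := by
  have hcomm : ∀ u v : V10, G.Adj u v ↔ G.Adj v u := fun u v => G.adj_comm u v
  intro a c
  rcases a with x | x <;> rcases c with y | y
  · simp only [φm, Sum.map_inl, hstd.1, mAdj, Bool.or_eq_true, decide_eq_true_eq,
      add_assoc, add_right_inj]
  · -- inl y', inr x'  (model: first arg inl, second inr)
    rw [show G.Adj (φm i (.inl x)) (φm i (.inr y)) ↔ G.Adj (φm i (.inr y)) (φm i (.inl x)) from
      hcomm _ _]
    simp only [φm, Sum.map_inl, Sum.map_inr]
    conv_rhs => rw [huv_iff hstd]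
    fin_cases x <;> fin_cases y <;>
      simp [mAdj, List.getD, add_assoc, add_right_inj, add_zero, left_eq_add,
        add_eq_left, decide_eq_true_eq]
  · simp only [φm, Sum.map_inl, Sum.map_inr]
    conv_rhs => rw [huv_iff hstd]
    fin_cases x <;> fin_cases y <;>
      simp [mAdj, List.getD, add_assoc, add_right_inj, add_zero, left_eq_add,
        add_eq_left, decide_eq_true_eq]
  · fin_cases x <;> fin_cases y <;>
      simp [mAdj, List.getD, φm, add_zero, decide_eq_true_eq] <;>
      first
        | rfl
        | exact h2
        | exact h1
        | exact fun hh => h2 ((hcomm _ _).mp hh)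
        | exact fun hh => h1 ((hcomm _ _).mp hh)
        | exact hcomm _ _
end Part3

section Part4
def ruleList : List MRule :=
 [  ⟨false, [(.inl 0), (.inl 1), (.inl 3), (.inr 0), (.inr 1), (.inr 2), (.inr 4)],
   [((.inl 0), (.inl 3), (.inl 1)), ((.inl 1), (.inr 0), (.inl 0)), ((.inl 0), (.inr 1), (.inl 1)), ((.inl 1), (.inr 2), (.inl 0)), ((.inl 0), (.inr 4), (.inl 1)), ((.inl 0), (.inl 3), (.inr 0)), ((.inl 0), (.inl 3), (.inr 1)), ((.inl 0), (.inl 3), (.inr 2)), ((.inl 0), (.inl 3), (.inr 4)), ((.inl 0), (.inr 1), (.inr 0)), ((.inl 0), (.inr 4), (.inr 0)), ((.inl 0), (.inr 1), (.inr 2)), ((.inl 0), (.inr 1), (.inr 4)), ((.inl 0), (.inr 4), (.inr 2)), ((.inl 1), (.inl 3), (.inr 0)), ((.inl 1), (.inl 3), (.inr 1)), ((.inl 1), (.inl 3), (.inr 2)), ((.inl 1), (.inl 3), (.inr 4)), ((.inl 1), (.inr 0), (.inr 1)), ((.inl 1), (.inr 0), (.inr 2)), ((.inl 1), (.inr 0),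 (.inr 4)), ((.inl 1), (.inr 2), (.inr 1)), ((.inl 1), (.inr 2), (.inr 4)), ((.inr 0), (.inr 1), (.inl 3)), ((.inl 3), (.inr 2), (.inr 0)), ((.inl 3), (.inr 4), (.inr 0)), ((.inl 3), (.inr 2), (.inr 1)), ((.inl 3), (.inr 4), (.inr 1)), ((.inl 3), (.inr 2), (.inr 4)), ((.inr 0), (.inr 1), (.inr 2)), ((.inr 0), (.inr 1), (.inr 4)), ((.inr 0), (.inr 4), (.inr 2))],
   [((.inl 0), (.inr 0), (.inr 2)), ((.inl 1), (.inr 1), (.inr 4)), ((.inr 1), (.inr 2), (.inr 4))]⟩,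
  ⟨true, [(.inl 0), (.inl 1), (.inl 4), (.inr 1), (.inr 2), (.inr 3), (.inr 4)],
   [((.inl 0), (.inl 1), (.inl 4)), ((.inl 0), (.inl 1), (.inr 1)), ((.inl 0), (.inl 1), (.inr 2)), ((.inl 0), (.inl 1), (.inr 3)), ((.inl 0), (.inl 1), (.inr 4)), ((.inl 0), (.inl 4), (.inr 1)), ((.inl 0), (.inl 4), (.inr 2)), ((.inl 0), (.inl 4), (.inr 3)), ((.inl 0), (.inl 4), (.inr 4)), ((.inl 0), (.inr 2), (.inr 1)), ((.inl 0), (.inr 3), (.inr 1)), ((.inl 0), (.inr 2), (.inr 3)), ((.inl 0), (.inr 2), (.inr 4)), ((.inl 0), (.inr 3), (.inr 4)), ((.inl 4), (.inr 1), (.inl 1)), ((.inl 4), (.inr 2), (.inl 1)), ((.inl 1), (.inr 3), (.inl 4)), ((.inl 1), (.inr 4), (.inl 4)), ((.inl 1), (.inr 3), (.inr 1)), ((.inl 1), (.inr 4), (.inr 1)), ((.inl 1), (.inr 3), (.inr 2)), ((.inl 1), (.inr 4), (.inr 2)), ((.inl 1), (.inr 3), (.inr 4)), ((.inl 4), (.inr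 1), (.inr 2)), ((.inl 4), (.inr 1), (.inr 3)), ((.inl 4), (.inr 1), (.inr 4)), ((.inl 4), (.inr 2), (.inr 3)), ((.inl 4), (.inr 2), (.inr 4))],
   [((.inl 0), (.inr 1), (.inr 4)), ((.inl 1), (.inr 1), (.inr 2)), ((.inl 4), (.inr 3), (.inr 4)), ((.inr 1), (.inr 2), (.inr 3)), ((.inr 1), (.inr 2), (.inr 4)), ((.inr 1), (.inr 3), (.inr 4)), ((.inr 2), (.inr 3), (.inr 4))]⟩,
  ⟨false, [(.inl 0), (.inl 2), (.inl 4), (.inr 0), (.inr 1), (.inr 3), (.inr 4)],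
   [((.inl 0), (.inl 2), (.inl 4)), ((.inl 0), (.inl 2), (.inr 0)), ((.inl 0), (.inl 2), (.inr 1)), ((.inl 0), (.inl 2), (.inr 3)), ((.inl 0), (.inl 2), (.inr 4)), ((.inl 4), (.inr 0), (.inl 0)), ((.inl 0), (.inr 1), (.inl 4)), ((.inl 4), (.inr 3), (.inl 0)), ((.inl 0), (.inr 4), (.inl 4)), ((.inl 0), (.inr 1), (.inr 0)), ((.inl 0), (.inr 4), (.inr 0)), ((.inl 0), (.inr 1), (.inr 3)), ((.inl 0), (.inr 1), (.inr 4)), ((.inl 0), (.inr 4), (.inr 3)), ((.inl 2), (.inl 4), (.inr 0)), ((.inl 2), (.inl 4), (.inr 1)), ((.inl 2), (.inl 4), (.inr 3)), ((.inl 2), (.inl 4), (.inr 4)), ((.inl 2), (.inr 1), (.inr 0)), ((.inl 2), (.inr 3), (.inr 0)), ((.inr 0), (.inr 4), (.inl 2)), ((.inl 2), (.inr 1), (.inr 3)), ((.inl 2), (.inr 1), (.inr 4)), ((.inl 2), (.inr 3), (.inr 4)), ((.inl 4), (.inr 0), (.inr 1)), ((.inl 4), (.inr 0), (.inr 3)),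 ((.inl 4), (.inr 0), (.inr 4)), ((.inl 4), (.inr 3), (.inr 1)), ((.inl 4), (.inr 3), (.inr 4)), ((.inr 0), (.inr 1), (.inr 3)), ((.inr 0), (.inr 1), (.inr 4)), ((.inr 0), (.inr 4), (.inr 3))],
   [((.inl 0), (.inr 0), (.inr 3)), ((.inl 4), (.inr 1), (.inr 4)), ((.inr 1), (.inr 3), (.inr 4))]⟩,
  ⟨true, [(.inl 0), (.inl 1), (.inl 2), (.inr 0), (.inr 2), (.inr 3), (.inr 4)],
   [((.inl 0), (.inl 1), (.inl 2)), ((.inl 0), (.inl 1), (.inr 0)), ((.inl 0), (.inl 1), (.inr 2)), ((.inl 0), (.inl 1), (.inr 3)), ((.inl 0), (.inl 1), (.inr 4)), ((.inl 2), (.inr 0), (.inl 0)), ((.inl 0), (.inr 2), (.inl 2)), ((.inl 0), (.inr 3), (.inl 2)), ((.inl 2), (.inr 4), (.inl 0)), ((.inl 0), (.inr 2), (.inr 0)), ((.inl 0), (.inr 3), (.inr 0)), ((.inl 0), (.inr 2), (.inr 3)), ((.inl 0), (.inr 2), (.inr 4)), ((.inl 0), (.inr 3), (.inr 4)), ((.inl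 1), (.inl 2), (.inr 0)), ((.inl 1), (.inl 2), (.inr 2)), ((.inl 1), (.inl 2), (.inr 3)), ((.inl 1), (.inl 2), (.inr 4)), ((.inl 1), (.inr 3), (.inr 0)), ((.inl 1), (.inr 4), (.inr 0)), ((.inl 1), (.inr 3), (.inr 2)), ((.inl 1), (.inr 4), (.inr 2)), ((.inl 1), (.inr 3), (.inr 4)), ((.inl 2), (.inr 0), (.inr 2)), ((.inl 2), (.inr 0), (.inr 3)), ((.inl 2), (.inr 0), (.inr 4)), ((.inl 2), (.inr 4), (.inr 2)), ((.inl 2), (.inr 4), (.inr 3))],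
   [((.inl 0), (.inr 0), (.inr 4)), ((.inl 1), (.inr 0), (.inr 2)), ((.inl 2), (.inr 2), (.inr 3)), ((.inr 0), (.inr 2), (.inr 3)), ((.inr 0), (.inr 2), (.inr 4)), ((.inr 0), (.inr 3), (.inr 4)), ((.inr 2), (.inr 3), (.inr 4))]⟩,
  ⟨false, [(.inl 0), (.inl 2), (.inl 3), (.inr 1), (.inr 2), (.inr 3), (.inr 4)],
   [((.inl 0), (.inl 2), (.inl 3)), ((.inl 0), (.inl 2), (.inr 1)), ((.inl 0), (.inl 2), (.inr 2)), ((.inl 0), (.inl 2), (.inr 3)), ((.inl 0), (.inl 2), (.inr 4)), ((.inl 0), (.inl 3), (.inr 1)), ((.inl 0), (.inl 3), (.inr 2)), ((.inl 0), (.inl 3), (.inr 3)), ((.inl 0), (.inl 3), (.inr 4)), ((.inl 0), (.inr 1), (.inr 2)), ((.inl 0), (.inr 1), (.inr 3)), ((.inl 0), (.inr 1), (.inr 4)), ((.inl 0), (.inr 4), (.inr 2)), ((.inl 0), (.inr 4), (.inr 3)), ((.inl 2), (.inr 1), (.inl 3)), ((.inl 3), (.inr 2), (.inl 2)), ((.inl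 2), (.inr 3), (.inl 3)), ((.inl 3), (.inr 4), (.inl 2)), ((.inl 2), (.inr 1), (.inr 2)), ((.inl 2), (.inr 1), (.inr 3)), ((.inl 2), (.inr 1), (.inr 4)), ((.inl 2), (.inr 3), (.inr 2)), ((.inl 2), (.inr 3), (.inr 4)), ((.inl 3), (.inr 2), (.inr 1)), ((.inl 3), (.inr 4), (.inr 1)), ((.inl 3), (.inr 2), (.inr 3)), ((.inl 3), (.inr 2), (.inr 4)), ((.inl 3), (.inr 4), (.inr 3))],
   [((.inl 0), (.inr 2), (.inr 3)), ((.inl 2), (.inr 2), (.inr 4)), ((.inl 3), (.inr 1), (.inr 3)), ((.inr 1), (.inr 2), (.inr 3)), ((.inr 1), (.inr 2), (.inr 4)), ((.inr 1), (.inr 3), (.inr 4)), ((.inr 2), (.inr 3), (.inr 4))]⟩,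
  ⟨true, [(.inl 0), (.inl 3), (.inl 4), (.inr 0), (.inr 1), (.inr 2), (.inr 3)],
   [((.inl 0), (.inl 4), (.inl 3)), ((.inl 3), (.inr 0), (.inl 0)), ((.inl 3), (.inr 1), (.inl 0)), ((.inl 0), (.inr 2), (.inl 3)), ((.inl 0), (.inr 3), (.inl 3)), ((.inl 0), (.inl 4), (.inr 0)), ((.inl 0), (.inl 4), (.inr 1)), ((.inl 0), (.inl 4), (.inr 2)), ((.inl 0), (.inl 4), (.inr 3)), ((.inl 0), (.inr 2), (.inr 0)), ((.inl 0), (.inr 3), (.inr 0)), ((.inl 0), (.inr 2), (.inr 1)), ((.inl 0), (.inr 3), (.inr 1)), ((.inl 0), (.inr 2), (.inr 3)), ((.inl 3), (.inl 4), (.inr 0)), ((.inl 3), (.inl 4), (.inr 1)), ((.inl 3), (.inl 4), (.inr 2)), ((.inl 3), (.inl 4), (.inr 3)), ((.inl 3), (.inr 0), (.inr 1)), ((.inl 3), (.inr 0), (.inr 2)), ((.inl 3), (.inr 0), (.inr 3)), ((.inl 3), (.inr 1), (.inr 2)), ((.inl 3), (.inr 1), (.inr 3)), ((.inl 4), (.inr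 1), (.inr 0)), ((.inl 4), (.inr 2), (.inr 0)), ((.inl 4), (.inr 1), (.inr 2)), ((.inl 4), (.inr 1), (.inr 3)), ((.inl 4), (.inr 2), (.inr 3))],
   [((.inl 0), (.inr 0), (.inr 1)), ((.inl 3), (.inr 2), (.inr 3)), ((.inl 4), (.inr 0), (.inr 3)), ((.inr 0), (.inr 1), (.inr 2)), ((.inr 0), (.inr 1), (.inr 3)), ((.inr 0), (.inr 2), (.inr 3)), ((.inr 1), (.inr 2), (.inr 3))]⟩,
  ⟨false, [(.inl 1), (.inl 2), (.inl 4), (.inr 0), (.inr 1), (.inr 2), (.inr 3)],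
   [((.inl 1), (.inl 4), (.inl 2)), ((.inl 1), (.inr 0), (.inl 2)), ((.inl 2), (.inr 1), (.inl 1)), ((.inl 1), (.inr 2), (.inl 2)), ((.inl 2), (.inr 3), (.inl 1)), ((.inl 1), (.inl 4), (.inr 0)), ((.inl 1), (.inl 4), (.inr 1)), ((.inl 1), (.inl 4), (.inr 2)), ((.inl 1), (.inl 4), (.inr 3)), ((.inl 1), (.inr 0), (.inr 1)), ((.inl 1), (.inr 0), (.inr 2)), ((.inl 1), (.inr 0), (.inr 3)), ((.inl 1), (.inr 2), (.inr 1)), ((.inl 1), (.inr 2), (.inr 3)), ((.inl 2), (.inl 4), (.inr 0)), ((.inl 2), (.inl 4), (.inr 1)), ((.inl 2), (.inl 4), (.inr 2)), ((.inl 2), (.inl 4), (.inr 3)), ((.inl 2), (.inr 1), (.inr 0)), ((.inl 2), (.inr 3), (.inr 0)), ((.inl 2), (.inr 1), (.inr 2)), ((.inl 2), (.inr 1), (.inr 3)), ((.inl 2), (.inr 3), (.inr 2)), ((.inl 4), (.inr 0), (.inr 1)), ((.inl 4), (.inr 0), (.inr 2)), ((.inl 4), (.inr 0), (.inr 3)),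 ((.inl 4), (.inr 3), (.inr 1)), ((.inl 4), (.inr 3), (.inr 2)), ((.inr 0), (.inr 1), (.inr 2)), ((.inr 0), (.inr 1), (.inr 3))],
   [((.inl 1), (.inr 1), (.inr 3)), ((.inl 2), (.inr 0), (.inr 2)), ((.inl 4), (.inr 1), (.inr 2)), ((.inr 0), (.inr 2), (.inr 3)), ((.inr 1), (.inr 2), (.inr 3))]⟩,
  ⟨false, [(.inl 1), (.inl 3), (.inl 4), (.inr 0), (.inr 2), (.inr 3), (.inr 4)],
   [((.inl 1), (.inl 3), (.inl 4)), ((.inl 1), (.inl 3), (.inr 0)), ((.inl 1), (.inl 3), (.inr 2)), ((.inl 1), (.inl 3), (.inr 3)), ((.inl 1), (.inl 3), (.inr 4)), ((.inl 1), (.inl 4), (.inr 0)), ((.inl 1), (.inl 4), (.inr 2)), ((.inl 1), (.inl 4), (.inr 3)), ((.inl 1), (.inl 4), (.inr 4)), ((.inl 1), (.inr 0), (.inr 2)), ((.inl 1), (.inr 0), (.inr 3)), ((.inl 1), (.inr 0), (.inr 4)), ((.inl 1), (.inr 2), (.inr 3)), ((.inl 1), (.inr 2), (.inr 4)), ((.inl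 4), (.inr 0), (.inl 3)), ((.inl 3), (.inr 2), (.inl 4)), ((.inl 4), (.inr 3), (.inl 3)), ((.inl 3), (.inr 4), (.inl 4)), ((.inl 3), (.inr 2), (.inr 0)), ((.inl 3), (.inr 4), (.inr 0)), ((.inl 3), (.inr 2), (.inr 3)), ((.inl 3), (.inr 2), (.inr 4)), ((.inl 3), (.inr 4), (.inr 3)), ((.inl 4), (.inr 0), (.inr 2)), ((.inl 4), (.inr 0), (.inr 3)), ((.inl 4), (.inr 0), (.inr 4)), ((.inl 4), (.inr 3), (.inr 2)), ((.inl 4), (.inr 3), (.inr 4)), ((.inr 0), (.inr 4), (.inr 2)), ((.inr 0), (.inr 4), (.inr 3))],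
   [((.inl 1), (.inr 3), (.inr 4)), ((.inl 3), (.inr 0), (.inr 3)), ((.inl 4), (.inr 2), (.inr 4)), ((.inr 0), (.inr 2), (.inr 3)), ((.inr 2), (.inr 3), (.inr 4))]⟩,
  ⟨true, [(.inl 1), (.inl 2), (.inl 3), (.inr 0), (.inr 1), (.inr 3), (.inr 4)],
   [((.inl 1), (.inl 2), (.inl 3)), ((.inl 1), (.inl 2), (.inr 0)), ((.inl 1), (.inl 2), (.inr 1)), ((.inl 1), (.inl 2), (.inr 3)), ((.inl 1), (.inl 2), (.inr 4)), ((.inl 3), (.inr 0), (.inl 1)), ((.inl 3), (.inr 1), (.inl 1)), ((.inl 1), (.inr 3), (.inl 3)), ((.inl 1), (.inr 4), (.inl 3)), ((.inl 1), (.inr 3), (.inr 0)), ((.inl 1), (.inr 4), (.inr 0)), ((.inl 1), (.inr 3), (.inr 1)), ((.inl 1), (.inr 4), (.inr 1)), ((.inl 1), (.inr 3), (.inr 4)), ((.inl 2), (.inl 3), (.inr 0)), ((.inl 2), (.inl 3), (.inr 1)), ((.inl 2), (.inl 3), (.inr 3)), ((.inl 2), (.inl 3), (.inr 4)), ((.inl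 2), (.inr 0), (.inr 1)), ((.inl 2), (.inr 0), (.inr 3)), ((.inl 2), (.inr 0), (.inr 4)), ((.inl 2), (.inr 4), (.inr 1)), ((.inl 2), (.inr 4), (.inr 3)), ((.inl 3), (.inr 0), (.inr 1)), ((.inl 3), (.inr 0), (.inr 3)), ((.inl 3), (.inr 0), (.inr 4)), ((.inl 3), (.inr 1), (.inr 3)), ((.inl 3), (.inr 1), (.inr 4))],
   [((.inl 1), (.inr 0), (.inr 1)), ((.inl 2), (.inr 1), (.inr 3)), ((.inl 3), (.inr 3), (.inr 4)), ((.inr 0), (.inr 1), (.inr 3)), ((.inr 0), (.inr 1), (.inr 4)), ((.inr 0), (.inr 3), (.inr 4)), ((.inr 1), (.inr 3), (.inr 4))]⟩,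
  ⟨true, [(.inl 2), (.inl 3), (.inl 4), (.inr 0), (.inr 1), (.inr 2), (.inr 4)],
   [((.inl 2), (.inl 3), (.inl 4)), ((.inl 2), (.inl 3), (.inr 0)), ((.inl 2), (.inl 3), (.inr 1)), ((.inl 2), (.inl 3), (.inr 2)), ((.inl 2), (.inl 3), (.inr 4)), ((.inl 2), (.inr 0), (.inl 4)), ((.inl 4), (.inr 1), (.inl 2)), ((.inl 4), (.inr 2), (.inl 2)), ((.inl 2), (.inr 4), (.inl 4)), ((.inl 2), (.inr 0), (.inr 1)), ((.inl 2), (.inr 0), (.inr 2)), ((.inl 2), (.inr 0), (.inr 4)), ((.inl 2), (.inr 4), (.inr 1)), ((.inl 2), (.inr 4), (.inr 2)), ((.inl 3), (.inl 4), (.inr 0)), ((.inl 3), (.inl 4), (.inr 1)), ((.inl 3), (.inl 4), (.inr 2)), ((.inl 3), (.inl 4), (.inr 4)), ((.inl 3), (.inr 0), (.inr 1)), ((.inl 3), (.inr 0), (.inr 2)), ((.inl 3), (.inr 0), (.inr 4)), ((.inl 3), (.inr 1), (.inr 2)), ((.inl 3), (.inr 1), (.inr 4)), ((.inl 4), (.inr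 1), (.inr 0)), ((.inl 4), (.inr 2), (.inr 0)), ((.inl 4), (.inr 1), (.inr 2)), ((.inl 4), (.inr 1), (.inr 4)), ((.inl 4), (.inr 2), (.inr 4))],
   [((.inl 2), (.inr 1), (.inr 2)), ((.inl 3), (.inr 2), (.inr 4)), ((.inl 4), (.inr 0), (.inr 4)), ((.inr 0), (.inr 1), (.inr 2)), ((.inr 0), (.inr 1), (.inr 4)), ((.inr 0), (.inr 2), (.inr 4)), ((.inr 1), (.inr 2), (.inr 4))]⟩]

def pickIdx (b : Bits) : Nat :=
  min 9 <| (if b.getD 0 false then (if b.getD 1 false then (if b.getD 2 false then (if b.getD 3 false then (if b.getD 4 false then (if b.getD 7 false then 1 else (if b.getD 5 false then (if b.getD 8 false then 3 else (if b.getD 12 false then 1 else 2)) else (if b.getD 6 false then (if b.getD 12 false then 1 else (if b.getD 8 false then (if b.getD 11 false then 5 else 7) else 2)) else (if b.getD 11 false then (if b.getD 8 false then 5 else (if b.getD 9 false then 8 else 0)) else 4)))) else (if b.getD 8 false then (if b.getD 5 false then 3 else (if b.getD 11 false then 5 else (if b.getD 6 false then (if b.getD 10 false then 3 else 4) else 4)))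 else 0)) else (if b.getD 4 false then (if b.getD 7 false then 1 else (if b.getD 5 false then (if b.getD 8 false then 3 else (if b.getD 12 false then 1 else 2)) else (if b.getD 6 false then (if b.getD 12 false then 1 else (if b.getD 8 false then (if b.getD 11 false then 5 else 7) else 2)) else 4))) else (if b.getD 8 false then (if b.getD 5 false then 3 else (if b.getD 6 false then (if b.getD 10 false then 3 else 4) else 4)) else 0))) else (if b.getD 3 false then (if b.getD 4 false then (if b.getD 5 false then (if b.getD 8 false then 3 else (if b.getD 9 false then (if b.getD 7 false then 1 else (if b.getD 12 false then 1 else 2)) else 0)) else (if b.getD 6 false then (if b.getD 7 false then (if b.getD 9 false then 1 else (if b.getD 8 false then (if b.getD 10 false then 3 else 6) else 0)) else (if b.getD 8 false then (if b.getD 10 false then 3 else (if b.getD 11 false then 5 else 4)) else (if b.getD 9 false then (if b.getD 12 false then 1 else 2) else 0))) else (if b.getD 7 false then (if b.getD 9 false then 1 else (if b.getD 8 false then (if b.getD 10 false then 3 else 6) else 0)) else (if b.getD 11 false then (if b.getD 8 false then 5 else (if b.getD 9 false then 8 else 0)) else 4)))) else (if b.getD 8 false then (if b.getD 5 false then 3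 else (if b.getD 11 false then 5 else (if b.getD 6 false then (if b.getD 10 false then 3 else 4) else 4))) else 0)) else (if b.getD 4 false then (if b.getD 5 false then (if b.getD 8 false then 3 else (if b.getD 9 false then (if b.getD 12 false then 1 else 2) else 0)) else (if b.getD 6 false then (if b.getD 10 false then (if b.getD 8 false then 3 else (if b.getD 12 false then 9 else 2)) else 4) else 4)) else (if b.getD 8 false then (if b.getD 5 false then 3 else (if b.getD 6 false then (if b.getD 10 false then 3 else 4) else 4)) else 0)))) else (if b.getD 4 false then (if b.getD 2 false then (if b.getD 7 false then 1 else (if b.getD 6 false then (if b.getD 12 false then 1 else 2) else 7)) else (if b.getD 3 false then (if b.getD 5 false then (if b.getD 6 false then (if b.getD 7 false then (if b.getD 8 false then 3 else (if b.getD 9 false then 1 else 0)) else (if b.getD 12 false then (if b.getD 9 false then 1 else (if b.getD 10 false then 9 else 6)) else 2)) else (if b.getD 7 false then (if b.getD 8 false then 3 else (if b.getD 9 false then 1 else 0)) else 7)) else (if b.getD 6 false then (if b.getD 7 false then (if b.getD 9 false then 1 else (if b.getD 8 false then (if b.getD 10 false then 3 else 6) else 0)) else (if b.getD 12 false then (if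 b.getD 9 false then 1 else (if b.getD 10 false then 9 else 6)) else 2)) else (if b.getD 7 false then (if b.getD 9 false then 1 else (if b.getD 8 false then (if b.getD 10 false then 3 else 6) else 0)) else 7))) else (if b.getD 10 false then (if b.getD 12 false then (if b.getD 6 false then 9 else (if b.getD 5 false then (if b.getD 7 false then (if b.getD 8 false then 3 else (if b.getD 9 false then 1 else 0)) else 7) else 4)) else 2) else 6))) else 2)) else (if b.getD 4 false then (if b.getD 1 false then (if b.getD 2 false then (if b.getD 7 false then 1 else (if b.getD 3 false then (if b.getD 5 false then (if b.getD 8 false then 5 else (if b.getD 12 false then 1 else 2)) else (if b.getD 6 false then (if b.getD 12 false then 1 else (if b.getD 8 false then (if b.getD 11 false then 5 else 7) else 2)) else (if b.getD 9 false then (if b.getD 11 false then 8 else 4) else 0))) else (if b.getD 5 false then (if b.getD 8 false then 5 else (if b.getD 12 false then 1 else 2)) else (if b.getD 6 false then (if b.getD 12 false then 1 else (if b.getD 8 false then (if b.getD 11 false then 5 else 7) else 2)) else 4)))) else (if b.getD 3 false then (if b.getD 9 false then (if b.getD 7 false then 1 else (if b.getD 11 false then 8 else (if b.getD 6 false then (if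 b.getD 12 false then 1 else 7) else 7))) else 0) else 6)) else (if b.getD 2 false then (if b.getD 7 false then 1 else (if b.getD 6 false then (if b.getD 12 false then 1 else 2) else 7)) else (if b.getD 3 false then (if b.getD 9 false then (if b.getD 7 false then 1 else (if b.getD 6 false then (if b.getD 12 false then 1 else 2) else 7)) else 0) else 6))) else 0))

def complete (r : MRule) : Bool :=
  decide (r.verts.toFinset.card = 7) &&
  (r.verts.all fun x => r.verts.all fun y => r.verts.all fun z =>
    decide (x = y) || decide (y = z) || decide (x = z) ||
    ((r.tripsF ++ r.tripsV).any fun t =>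
      (decide (t.1 = x) || decide (t.1 = y) || decide (t.1 = z)) &&
      (decide (t.2.1 = x) || decide (t.2.1 = y) || decide (t.2.1 = z)) &&
      (decide (t.2.2 = x) || decide (t.2.2 = y) || decide (t.2.2 = z))))

set_option maxRecDepth 100000 in
theorem completeOK : ruleList.all complete = true := by decide

set_option maxRecDepth 100000 in
theorem fixedOK : ∀ b0 b1 b2 b3 b4 b5 b6 b7 b8 b9 b10 b11 b12 : Bool,
    ruleList.all (edgesOKF [b0,b1,b2,b3,b4,b5,b6,b7,b8,b9,b10,b11,b12]) = true :=
  fun _ _ _ _ _ _ _ _ _ _ _ _ _ => rfl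

set_option maxRecDepth 100000 in
set_option maxHeartbeats 10000000 in
theorem coverV : ∀ b0 b1 b2 b3 b4 b5 b6 b7 b8 b9 b10 b11 b12 : Bool,
    edgesOKV [b0,b1,b2,b3,b4,b5,b6,b7,b8,b9,b10,b11,b12]
      (ruleList.getD (pickIdx [b0,b1,b2,b3,b4,b5,b6,b7,b8,b9,b10,b11,b12]) default) = true := by
  decide

lemma pickIdx_lt (b : Bits) : pickIdx b < ruleList.length := by
  have h : pickIdx b ≤ 9 := min_le_left _ _
  have : ruleList.length = 10 := rfl
  omega

end Part4

section Part5

lemma getD_mem_ruleList (n : Nat) (h : n < ruleList.length) :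
    ruleList.getD n default ∈ ruleList := by
  rw [List.getD_eq_getElem?_getD, List.getElem?_eq_getElem h]
  exact List.getElem_mem h

lemma tminor_of_induce' (A : FinGraph) (S : Set A.V) {inst : Fintype ↥S}
    (hS : S ≠ Set.univ) : TMinor (@FinGraph.of _ inst (A.graph.induce S)) A := by
  have h := tminor_of_induce A S hS
  have heq : ∀ (i1 i2 : Fintype ↥S),
      @FinGraph.of _ i1 (A.graph.induce S) = @FinGraph.of _ i2 (A.graph.induce S) := by
    intro i1 i2
    cases Subsingleton.elim i1 i2
    rfl
  rw [heq inst _]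
  exact h

lemma glue_side {H : SimpleGraph V10}
    (hmin : ∀ B : FinGraph, ProperTMinor B (FinGraph.of H) → TPerfect B.graph)
    (b : Bits) (s : Bool) (i : Fin 5)
    (hbr : ∀ a c : V10, sideA b s a c = true → H.Adj (φm i a) (φm i c))
    (r : MRule) (hside : r.side = s)
    (hcom : complete r = true) (hF : edgesOKF b r = true) (hV : edgesOKV b r = true) :
    False := by
  classical
  subst hside
  simp only [complete, Bool.and_eq_true, List.all_eq_true, List.any_eq_true,
    Bool.or_eq_true, decide_eq_true_eq] at hcom
  obtain ⟨hcard7, hcov⟩ := hcom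
  simp only [edgesOKF, List.all_eq_true] at hF
  simp only [edgesOKV, List.all_eq_true] at hV
  have hedge : ∀ t ∈ r.tripsF ++ r.tripsV, tripOK b r.side t = true := by
    intro t ht
    rcases List.mem_append.mp ht with h | h
    · exact hF t h
    · exact hV t h
  set S : Finset V10 := r.verts.toFinset.image (φm i) with hS
  have hScard : S.card = 7 := by
    rw [hS, Finset.card_image_of_injective _ (φm_injective i), hcard7]
  -- independence bound
  have hbound : ∀ T : Set ↥((S : Set V10)), IsIndep (H.induce (S : Set V10)) T →
      T.ncard ≤ 2 := by
    intro T hT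
    by_contra hctr
    push_neg at hctr
    obtain ⟨T', hT'sub, hT'card⟩ := Set.exists_subset_card_eq (s := T) (n := 3) hctr
    rw [Set.ncard_eq_three] at hT'card
    obtain ⟨a, c, d, hac, had, hcd, rfl⟩ := hT'card
    have haT : a ∈ T := hT'sub (by simp)
    have hcT : c ∈ T := hT'sub (by simp)
    have hdT : d ∈ T := hT'sub (by simp)
    -- pull back to model vertices
    have pull : ∀ x : ↥((S : Set V10)), ∃ m ∈ r.verts, φm i m = (x : V10) := by
      intro x
      have hx : (x : V10) ∈ Finset.image (φm i) r.verts.toFinset := x.2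
      obtain ⟨m, hm, hme⟩ := Finset.mem_image.mp hx
      exact ⟨m, List.mem_toFinset.mp hm, hme⟩
    obtain ⟨am, hamv, hame⟩ := pull a
    obtain ⟨cm, hcmv, hcme⟩ := pull c
    obtain ⟨dm, hdmv, hdme⟩ := pull d
    have hne1 : am ≠ cm := by
      intro he; apply hac; apply Subtype.ext
      rw [← hame, ← hcme, he]
    have hne2 : cm ≠ dm := by
      intro he; apply hcd; apply Subtype.ext
      rw [← hcme, ← hdme, he]
    have hne3 : am ≠ dm := by
      intro he; apply had; apply Subtype.ext
      rw [← hame, ← hdme, he]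
    have contra : ∀ p q : V10, ((p = am ∨ p = cm) ∨ p = dm) → ((q = am ∨ q = cm) ∨ q = dm) →
        H.Adj (φm i p) (φm i q) → False := by
      have hmem : ∀ p : V10, ((p = am ∨ p = cm) ∨ p = dm) →
          ∃ x : ↥((S : Set V10)), x ∈ T ∧ φm i p = (x : V10) := by
        rintro p ((rfl | rfl) | rfl)
        exacts [⟨a, haT, hame⟩, ⟨c, hcT, hcme⟩, ⟨d, hdT, hdme⟩]
      intro p q hp hq hadj
      obtain ⟨x, hxT, hxp⟩ := hmem p hp
      obtain ⟨y, hyT, hyq⟩ := hmem q hq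
      have hne := H.ne_of_adj hadj
      rw [hxp, hyq] at hne hadj
      refine hT hxT hyT (fun he => hne (congrArg _ he)) ?_
      exact hadj
    -- find a triple covering am cm dm
    rcases hcov am hamv cm hcmv dm hdmv with ((he | he) | he) | ⟨t, ht, ⟨h1, h2⟩, h3⟩
    · exact hne1 he
    · exact hne2 he
    · exact hne3 he
    have htrip : (sideA b r.side t.1 t.2.1 = true ∨ sideA b r.side t.2.1 t.2.2 = true) ∨
        sideA b r.side t.1 t.2.2 = true := by
      have h := hedge t ht
      simpa only [tripOK, Bool.or_eq_true] using h
    rcases htrip with (hh | hh) | hh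
    · exact contra _ _ h1 h2 (hbr _ _ hh)
    · exact contra _ _ h2 h3 (hbr _ _ hh)
    · exact contra _ _ h1 h3 (hbr _ _ hh)
  -- cardinalities
  have hcards : Fintype.card ↥((S : Set V10)) = 7 := by
    rw [← Set.toFinset_card, Finset.toFinset_coe]
    exact hScard
  have hv10 : Fintype.card V10 = 10 := by simp [V10]
  have hnotTP : ¬ TPerfect (H.induce (S : Set V10)) :=
    notTPerfect_of_indep_bound_s16 _ 2 hbound (by omega)
  have hSneuniv : (S : Set V10) ≠ Set.univ := by
    intro hun
    have : S = Finset.univ := by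
      apply Finset.coe_injective
      rw [hun, Finset.coe_univ]
    rw [this, Finset.card_univ, hv10] at hScard
    omega
  have htm : TMinor (FinGraph.of (H.induce (S : Set V10))) (FinGraph.of H) :=
    tminor_of_induce' (FinGraph.of H) (S : Set V10) hSneuniv
  have hlt : Fintype.card (FinGraph.of (H.induce (S : Set V10))).V
      < Fintype.card (FinGraph.of H).V := by
    show Fintype.card ↥((S : Set V10)) < Fintype.card V10
    omega
  exact hnotTP (hmin _ ⟨htm, hlt⟩)

end Part5

section Part6


/-- if both `G` and its complement are minimally t-imperfect (standard
10-vertex labeling), then for every `i` at least one of `u_iu_{i-1}` and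
`u_iu_{i+1}` is an edge. -/
theorem stmt16 (G : SimpleGraph V10)
    (hG : MinimallyTImperfect G) (hGc : MinimallyTImperfect Gᶜ)
    (hstd : Std10 G) :
    ∀ i : Fin 5, G.Adj (.inr i) (.inr (i - 1)) ∨ G.Adj (.inr i) (.inr (i + 1)) := by
  classical
  intro i
  by_contra hcon
  push_neg at hcon
  obtain ⟨hA, hB⟩ := hcon
  have h1 : ¬ G.Adj (.inr i) (.inr (i+4)) := by
    have he : i - 1 = i + 4 := by
      rw [sub_eq_add_neg, show (-1 : Fin 5) = 4 from rfl]
    rw [← he]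
    exact hA
  have hbr := bridge hstd i h1 hB
  have hV := coverV (decide (G.Adj (.inr i) (.inr (i+2)))) (decide (G.Adj (.inr i) (.inr (i+3)))) (decide (G.Adj (.inr (i+1)) (.inr (i+2)))) (decide (G.Adj (.inr (i+1)) (.inr (i+3)))) (decide (G.Adj (.inr (i+1)) (.inr (i+4)))) (decide (G.Adj (.inr (i+2)) (.inr (i+3)))) (decide (G.Adj (.inr (i+2)) (.inr (i+4)))) (decide (G.Adj (.inr (i+3)) (.inr (i+4)))) (decide (G.Adj (.inr i) (.inl i))) (decide (G.Adj (.inr (i+1)) (.inl (i+1)))) (decide (G.Adj (.inr (i+2)) (.inl (i+2)))) (decide (G.Adj (.inr (i+3)) (.inl (i+3)))) (decide (G.Adj (.inr (i+4)) (.inl (i+4))))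
  have hFall := fixedOK (decide (G.Adj (.inr i) (.inr (i+2)))) (decide (G.Adj (.inr i) (.inr (i+3)))) (decide (G.Adj (.inr (i+1)) (.inr (i+2)))) (decide (G.Adj (.inr (i+1)) (.inr (i+3)))) (decide (G.Adj (.inr (i+1)) (.inr (i+4)))) (decide (G.Adj (.inr (i+2)) (.inr (i+3)))) (decide (G.Adj (.inr (i+2)) (.inr (i+4)))) (decide (G.Adj (.inr (i+3)) (.inr (i+4)))) (decide (G.Adj (.inr i) (.inl i))) (decide (G.Adj (.inr (i+1)) (.inl (i+1)))) (decide (G.Adj (.inr (i+2)) (.inl (i+2)))) (decide (G.Adj (.inr (i+3)) (.inl (i+3)))) (decide (G.Adj (.inr (i+4)) (.inl (i+4))))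
  set L : Bits := [decide (G.Adj (.inr i) (.inr (i+2))),
      decide (G.Adj (.inr i) (.inr (i+3))),
      decide (G.Adj (.inr (i+1)) (.inr (i+2))),
      decide (G.Adj (.inr (i+1)) (.inr (i+3))),
      decide (G.Adj (.inr (i+1)) (.inr (i+4))),
      decide (G.Adj (.inr (i+2)) (.inr (i+3))),
      decide (G.Adj (.inr (i+2)) (.inr (i+4))),
      decide (G.Adj (.inr (i+3)) (.inr (i+4))),
      decide (G.Adj (.inr i) (.inl i)),
      decide (G.Adj (.inr (i+1)) (.inl (i+1))),
      decide (G.Adj (.inr (i+2)) (.inl (i+2))),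
      decide (G.Adj (.inr (i+3)) (.inl (i+3))),
      decide (G.Adj (.inr (i+4)) (.inl (i+4)))] with hL
  set r : MRule := ruleList.getD (pickIdx L) default with hr
  have hmem : r ∈ ruleList := getD_mem_ruleList _ (pickIdx_lt L)
  have hcom : complete r = true := List.all_eq_true.mp completeOK r hmem
  have hF : edgesOKF L r = true := List.all_eq_true.mp hFall r hmem
  cases hside : r.side with
  | false =>
    refine glue_side hGc.2 L false i ?_ r hside hcom hF hV
    intro a c h
    simp only [sideA, if_neg (by simp : ¬ (false = true)), Bool.and_eq_true,
      Bool.not_eq_true', decide_eq_false_iff_not] at h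
    rw [SimpleGraph.compl_adj]
    refine ⟨fun he => h.1 (φm_injective i he), fun hadj => ?_⟩
    rw [← hbr a c] at hadj
    rw [h.2] at hadj
    exact Bool.false_ne_true hadj
  | true =>
    refine glue_side hG.2 L true i ?_ r hside hcom hF hV
    intro a c h
    refine (hbr a c).mp ?_
    simpa [sideA] using h

end Part6
end TP
end
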